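/- arXiv:1107.4169 — 3 statements merged into one kernel-verified Lean document; each statement's English description precedes it below -/
import Mathlib

section
/- A word with letters in [n] has partition content (the number of occurrences of j is weakly decreasing in j) if and only if at each stage of the Lascoux–Schützenberger selection algorithm, for every letter j+1 remaining after removing previously selected cycles there is a selectable copy, i.e., the algorithm terminates with the empty word. Equivalently: the selection algorithm applied to a word of partition content always succeeds, extracting in each round a sequence 1,2,...,k for some k, and after all rounds the word is empty. -/
/-! The Lascoux–Schützenberger charge algorithm. -/
namespace LS

/-- Largest index `i < pos` with `w[i] = x`. -/
def lastIdxBefore (w : List ℕ) (x pos : ℕ) : Option ℕ :=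
  ((List.range pos).filter (fun i => w.getD i 0 == x)).getLast?

/-- Largest index `i` with `w[i] = x`. -/
def lastIdx (w : List ℕ) (x : ℕ) : Option ℕ :=
  ((List.range w.length).filter (fun i => w.getD i 0 == x)).getLast?

/-- One round of the selection algorithm: starting from target `j` at position `pos`,
select `j+1, j+2, ...`; record selected indices and the values `j` at which a wrap
(re-scan from the right end) occurred.  Returns `(k, selected, wraps)`. -/
def roundGo (w : List ℕ) : ℕ → ℕ → ℕ → List ℕ → List ℕ → ℕ × List ℕ × List ℕ
  | 0, j, _, sel, wraps => (j, sel, wraps)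
  | fuel+1, j, pos, sel, wraps =>
    match lastIdxBefore w (j+1) pos with
    | some i => roundGo w fuel (j+1) i (i :: sel) wraps
    | none =>
      match lastIdx w (j+1) with
      | some i => roundGo w fuel (j+1) i (i :: sel) (j :: wraps)
      | none => (j, sel, wraps)

/-- One full round: its charge contribution `Σ (k - j)` over wraps, and the word
with the selected letters removed. -/
def roundA (w : List ℕ) : ℕ × List ℕ :=
  match lastIdx w 1 with
  | none => (0, w)
  | some i0 =>
    let r := roundGo w w.length 1 i0 [i0] []
    (r.2.2.foldl (fun s j => s + (r.1 - j)) 0,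
     ((List.range w.length).filter (fun t => !(r.2.1.contains t))).map (fun t => w.getD t 0))

def chargeGo : ℕ → List ℕ → ℕ
  | 0, _ => 0
  | fuel+1, w => if w.isEmpty then 0 else (roundA w).1 + chargeGo fuel (roundA w).2

/-- The Lascoux–Schützenberger charge of a word. -/
def charge (w : List ℕ) : ℕ := chargeGo w.length w

/-- Repeatedly apply rounds of the selection algorithm, removing selected letters. -/
def runRounds : ℕ → List ℕ → List ℕ
  | 0, w => w
  | fuel+1, w => if w.isEmpty then [] else runRounds fuel (roundA w).2

end LS


namespace LSAux

lemma map_range_getD (w : List ℕ) :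
    (List.range w.length).map (fun i => w.getD i 0) = w := by
  apply List.ext_getElem
  · simp
  · intro n h1 h2
    simp [List.getD_eq_getElem?_getD, List.getElem?_eq_getElem h2]

lemma count_eq_length_filter (w : List ℕ) (x : ℕ) :
    w.count x = ((List.range w.length).filter (fun i => w.getD i 0 == x)).length := by
  conv_lhs => rw [← map_range_getD w]
  rw [List.count, List.countP_map, List.countP_eq_length_filter]
  rfl

lemma lastIdx_eq_none_iff (w : List ℕ) (x : ℕ) :
    LS.lastIdx w x = none ↔ w.count x = 0 := by
  rw [LS.lastIdx, List.getLast?_eq_none_iff, count_eq_length_filter,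
    List.length_eq_zero_iff]

lemma lastIdx_spec {w : List ℕ} {x i : ℕ} (h : LS.lastIdx w x = some i) :
    i < w.length ∧ w.getD i 0 = x := by
  have hm := List.mem_of_mem_getLast? h
  simpa only [List.mem_filter, List.mem_range, beq_iff_eq] using hm

lemma lastIdxBefore_spec {w : List ℕ} {x pos i : ℕ}
    (h : LS.lastIdxBefore w x pos = some i) :
    i < pos ∧ w.getD i 0 = x := by
  have hm := List.mem_of_mem_getLast? h
  simpa only [List.mem_filter, List.mem_range, beq_iff_eq] using hm

lemma roundGo_spec (w : List ℕ) (fuel : ℕ) : ∀ (j pos : ℕ) (sel wraps : List ℕ),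
    pos ≤ w.length →
    ∃ L : List ℕ,
      (LS.roundGo w fuel j pos sel wraps).2.1 = L ++ sel ∧
      L.map (fun i => w.getD i 0)
        = (List.range' (j+1) ((LS.roundGo w fuel j pos sel wraps).1 - j)).reverse ∧
      (∀ i ∈ L, i < w.length) ∧
      j ≤ (LS.roundGo w fuel j pos sel wraps).1 ∧
      (LS.roundGo w fuel j pos sel wraps).1 ≤ j + fuel ∧
      ((LS.roundGo w fuel j pos sel wraps).1 < j + fuel →
        w.count ((LS.roundGo w fuel j pos sel wraps).1 + 1) = 0) := by
  induction fuel with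
  | zero =>
    intro j pos sel wraps hpos
    refine ⟨[], ?_⟩
    simp [LS.roundGo]
  | succ fuel ih =>
    intro j pos sel wraps hpos
    rcases h1 : LS.lastIdxBefore w (j+1) pos with _ | i
    · rcases h2 : LS.lastIdx w (j+1) with _ | i
      · refine ⟨[], ?_⟩
        have hc : w.count (j+1) = 0 := (lastIdx_eq_none_iff w (j+1)).mp h2
        simp [LS.roundGo, h1, h2, hc]
      · obtain ⟨hi, hgi⟩ := lastIdx_spec h2
        obtain ⟨L, hsel, hmap, hL, hjk, hk1, hcnt⟩ :=
          ih (j+1) i (i :: sel) (j :: wraps) (le_of_lt hi)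
        have hred : LS.roundGo w (fuel+1) j pos sel wraps
            = LS.roundGo w fuel (j+1) i (i :: sel) (j :: wraps) := by
          simp [LS.roundGo, h1, h2]
        rw [hred]
        set k := (LS.roundGo w fuel (j+1) i (i :: sel) (j :: wraps)).1 with hk
        refine ⟨L ++ [i], by simpa using hsel, ?_, ?_, by omega, by omega, by
          intro h; exact hcnt (by omega)⟩
        · have hkj : k - j = (k - (j+1)) + 1 := by omega
          rw [List.map_append, hmap, hkj, List.range'_succ, List.reverse_cons]
          simp only [List.map_cons, List.map_nil, hgi]
        · intro t ht
          rcases List.mem_append.mp ht with h | h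
          · exact hL t h
          · simp at h; omega
    · obtain ⟨hi, hgi⟩ := lastIdxBefore_spec h1
      have hi' : i < w.length := lt_of_lt_of_le hi hpos
      obtain ⟨L, hsel, hmap, hL, hjk, hk1, hcnt⟩ :=
        ih (j+1) i (i :: sel) wraps (le_of_lt hi')
      have hred : LS.roundGo w (fuel+1) j pos sel wraps
          = LS.roundGo w fuel (j+1) i (i :: sel) wraps := by
        simp [LS.roundGo, h1]
      rw [hred]
      set k := (LS.roundGo w fuel (j+1) i (i :: sel) wraps).1 with hk
      refine ⟨L ++ [i], by simpa using hsel, ?_, ?_, by omega, by omega, by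
        intro h; exact hcnt (by omega)⟩
      · have hkj : k - j = (k - (j+1)) + 1 := by omega
        rw [List.map_append, hmap, hkj, List.range'_succ, List.reverse_cons]
        simp only [List.map_cons, List.map_nil, hgi]
      · intro t ht
        rcases List.mem_append.mp ht with h | h
        · exact hL t h
        · simp at h; omega

lemma roundA_spec (w : List ℕ) (h1 : 0 < w.count 1) :
    ∃ k : ℕ, 1 ≤ k ∧ w.count (k+1) = 0 ∧
      (∀ x, (LS.roundA w).2.count x + (if 1 ≤ x ∧ x ≤ k then 1 else 0) = w.count x) ∧
      (LS.roundA w).2.length + k = w.length := by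
  obtain ⟨i0, hsome⟩ : ∃ i0, LS.lastIdx w 1 = some i0 := by
    rcases h : LS.lastIdx w 1 with _ | i0
    · rw [lastIdx_eq_none_iff] at h; omega
    · exact ⟨i0, rfl⟩
  obtain ⟨hi0, hgi0⟩ := lastIdx_spec hsome
  obtain ⟨L, hsel, hmap, hL, hjk, hk1, hcnt⟩ :=
    roundGo_spec w w.length 1 i0 [i0] [] (le_of_lt hi0)
  set r := LS.roundGo w w.length 1 i0 [i0] [] with hr
  set k := r.1 with hk
  set sel := r.2.1 with hsel'
  set g : ℕ → ℕ := fun i => w.getD i 0 with hg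
  have h2 : (List.range' 1 k).reverse = (List.range' (1+1) (k-1)).reverse ++ [1] := by
    have hkk : k = (k-1)+1 := by omega
    conv_lhs => rw [hkk]
    rw [List.range'_succ, List.reverse_cons]
  have hmapsel : sel.map g = (List.range' 1 k).reverse := by
    rw [hsel, List.map_append, hmap, h2]
    simp only [List.map_cons, List.map_nil, hg, hgi0]
  have hlensel : sel.length = k := by
    have := congrArg List.length hmapsel
    simpa using this
  have hnodup : sel.Nodup := by
    apply List.Nodup.of_map g
    rw [hmapsel]
    exact List.nodup_reverse.mpr (List.nodup_range' (s := 1) (n := k))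
  have hsub : sel ⊆ List.range w.length := by
    intro t ht
    rw [List.mem_range]
    rw [hsel] at ht
    rcases List.mem_append.mp ht with h | h
    · exact hL t h
    · simp at h; omega
  have hkle : k ≤ w.length := by
    have := (List.subperm_of_subset hnodup hsub).length_le
    simpa [hlensel] using this
  have hcnt0 : w.count (k + 1) = 0 := hcnt (by omega)
  -- the new word
  have hroundA : (LS.roundA w).2
      = ((List.range w.length).filter (fun t => !(sel.contains t))).map g := by
    simp only [LS.roundA, hsome]
    rfl
  have hfq : List.Perm ((List.range w.length).filter (fun t => sel.contains t)) sel := by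
    apply List.perm_of_nodup_nodup_toFinset_eq
      ((List.nodup_range (n := _)).filter (fun t => sel.contains t)) hnodup
    ext t
    simp only [List.mem_toFinset, List.mem_filter]
    constructor
    · rintro ⟨_, h⟩
      exact List.elem_iff.mp h
    · intro h
      exact ⟨hsub h, List.elem_iff.mpr h⟩
  have hsplit : List.Perm
      (((List.range w.length).filter (fun t => sel.contains t)).map g
        ++ ((List.range w.length).filter (fun t => !(sel.contains t))).map g) w := by
    rw [← List.map_append]
    have := (List.filter_append_perm (fun t => sel.contains t) (List.range w.length)).map g
    rwa [map_range_getD w] at this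
  refine ⟨k, hjk, hcnt0, ?_, ?_⟩
  · intro x
    have e1 : (((List.range w.length).filter (fun t => sel.contains t)).map g).count x
        + (((List.range w.length).filter (fun t => !(sel.contains t))).map g).count x
        = w.count x := by
      rw [← hsplit.count_eq, List.count_append]
    have e2 : (((List.range w.length).filter (fun t => sel.contains t)).map g).count x
        = if 1 ≤ x ∧ x ≤ k then 1 else 0 := by
      rw [(hfq.map g).count_eq, hmapsel, List.count_reverse,
        List.Nodup.count (List.nodup_range' (s := 1) (n := k))]
      by_cases hx : 1 ≤ x ∧ x ≤ k
      · rw [if_pos (List.mem_range'_1.mpr ⟨hx.1, by omega⟩), if_pos hx]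
      · rw [if_neg (fun hmem => hx (by
          obtain ⟨a, b⟩ := List.mem_range'_1.mp hmem; exact ⟨a, by omega⟩)), if_neg hx]
    rw [hroundA]
    omega
  · have e3 : ((List.range w.length).filter (fun t => sel.contains t)).length
        + ((List.range w.length).filter (fun t => !(sel.contains t))).length
        = w.length := by
      have := (List.filter_append_perm (fun t => sel.contains t) (List.range w.length)).length_eq
      simpa using this
    have e4 : ((List.range w.length).filter (fun t => sel.contains t)).length = k := by
      rw [hfq.length_eq, hlensel]
    rw [hroundA]
    simp only [List.length_map]
    omega


lemma roundA_id_of_no_one {w : List ℕ} (h : w.count 1 = 0) : (LS.roundA w).2 = w := by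
  have hn : LS.lastIdx w 1 = none := (lastIdx_eq_none_iff w 1).mpr h
  simp [LS.roundA, hn]

lemma runRounds_ne_nil (fuel : ℕ) : ∀ (w : List ℕ) (j : ℕ),
    w.count (j+1) < w.count (j+2) → LS.runRounds fuel w ≠ [] := by
  induction fuel with
  | zero =>
    intro w j h hnil
    rw [LS.runRounds] at hnil
    subst hnil
    simp at h
  | succ fuel ih =>
    intro w j h
    have hne : w ≠ [] := by rintro rfl; simp at h
    rw [LS.runRounds, if_neg (by simpa [List.isEmpty_iff] using hne)]
    by_cases h1 : 0 < w.count 1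
    · obtain ⟨k, hk1, hk0, hcount, hlen⟩ := roundA_spec w h1
      apply ih _ j
      have e1 := hcount (j+1)
      have e2 := hcount (j+2)
      by_cases hc : j + 2 ≤ k
      · rw [if_pos (⟨by omega, by omega⟩ : 1 ≤ j+1 ∧ j+1 ≤ k)] at e1
        rw [if_pos (⟨by omega, by omega⟩ : 1 ≤ j+2 ∧ j+2 ≤ k)] at e2
        omega
      · by_cases hc2 : j + 1 ≤ k
        · have hkj : j + 2 = k + 1 := by omega
          rw [hkj] at h
          omega
        · rw [if_neg (by omega : ¬(1 ≤ j+1 ∧ j+1 ≤ k))] at e1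
          rw [if_neg (by omega : ¬(1 ≤ j+2 ∧ j+2 ≤ k))] at e2
          omega
    · rw [roundA_id_of_no_one (by omega)]
      exact ih w j h

lemma runRounds_eq_nil (fuel : ℕ) : ∀ (w : List ℕ),
    w.length ≤ fuel → (∀ x ∈ w, 1 ≤ x) → (∀ j, w.count (j+2) ≤ w.count (j+1)) →
    LS.runRounds fuel w = [] := by
  induction fuel with
  | zero =>
    intro w hl _ _
    rw [LS.runRounds]
    exact List.length_eq_zero_iff.mp (by omega)
  | succ fuel ih =>
    intro w hl hmem hpc
    by_cases hw : w = []
    · rw [LS.runRounds, if_pos (by simp [hw])]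
    · rw [LS.runRounds, if_neg (by simpa [List.isEmpty_iff] using hw)]
      obtain ⟨x, hx⟩ := List.exists_mem_of_ne_nil w hw
      have hx1 : 1 ≤ x := hmem x hx
      have hcx : 0 < w.count x := List.count_pos_iff.mpr hx
      have hchain : ∀ m : ℕ, w.count (m+1) ≤ w.count 1 := by
        intro m
        induction m with
        | zero => exact le_refl _
        | succ m ihm => exact le_trans (hpc m) ihm
      have h1 : 0 < w.count 1 := by
        have := hchain (x - 1)
        have hx' : x - 1 + 1 = x := by omega
        rw [hx'] at this
        omega
      obtain ⟨k, hk1, hk0, hcount, hlen⟩ := roundA_spec w h1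
      apply ih
      · omega
      · intro y hy
        have hy0 : 0 < (LS.roundA w).2.count y := List.count_pos_iff.mpr hy
        have := hcount y
        have hyw : 0 < w.count y := by omega
        exact hmem y (List.count_pos_iff.mp hyw)
      · intro j
        have e1 := hcount (j+1)
        have e2 := hcount (j+2)
        have hpcj := hpc j
        by_cases hc : j + 2 ≤ k
        · rw [if_pos (⟨by omega, by omega⟩ : 1 ≤ j+1 ∧ j+1 ≤ k)] at e1
          rw [if_pos (⟨by omega, by omega⟩ : 1 ≤ j+2 ∧ j+2 ≤ k)] at e2
          omega
        · by_cases hc2 : j + 1 ≤ k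
          · have hz : w.count (j+2) = 0 := by
              rw [(by omega : j + 2 = k + 1)]; exact hk0
            rw [if_pos (⟨by omega, by omega⟩ : 1 ≤ j+1 ∧ j+1 ≤ k)] at e1
            rw [if_neg (by omega : ¬(1 ≤ j+2 ∧ j+2 ≤ k))] at e2
            omega
          · rw [if_neg (by omega : ¬(1 ≤ j+1 ∧ j+1 ≤ k))] at e1
            rw [if_neg (by omega : ¬(1 ≤ j+2 ∧ j+2 ≤ k))] at e2
            omega

end LSAux
/-- A word with letters in `[n]` has partition content (the number of
occurrences of `j` is weakly decreasing in `j`) if and only if the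
Lascoux–Schützenberger selection algorithm terminates with the empty word. -/
theorem partition_content_iff_selection_succeeds (n : ℕ) (w : List ℕ)
    (hw : ∀ x ∈ w, 1 ≤ x ∧ x ≤ n) :
    (∀ j : ℕ, w.count (j+2) ≤ w.count (j+1)) ↔ LS.runRounds w.length w = [] := by
  constructor
  · intro hpc
    exact LSAux.runRounds_eq_nil w.length w le_rfl (fun x hx => (hw x hx).1) hpc
  · intro hrun
    by_contra hpc
    push_neg at hpc
    obtain ⟨j, hj⟩ := hpc
    exact LSAux.runRounds_ne_nil w.length w j hj hrun
end

section
/- Let b be a column-strict strictly increasing column of height k with entries in the ordered alphabet [n̄] = {1<2<...<n<n̄<...<1̄}. Then b satisfies the Kashiwara–Nakashima condition (for every z with both z and z̄ occurring in b at positions p<q respectively, one has q−p > k−z) if and only if b can be split in the sense of Definition of split columns; in particular, if b is a KN column, the set J = {t_1 > ... > t_r} in the splitting procedure exists and is unique. -/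
/-! Circular reordering (Algorithm 3.2), descents, arms, and the charge word. -/
namespace CO

/-- Position of `x` in the circular order `≺ᵢ` on the alphabet `{1,...,n}`. -/
def circKey (n i x : ℕ) : ℕ := (x + n - i) % n

/-- Minimum of a list w.r.t. the circular order `≺ᵢ`. -/
def circMin (n i : ℕ) (l : List ℕ) : ℕ :=
  l.foldl (fun acc x => if circKey n i x < circKey n i acc then x else acc) (l.headD 0)

/-- Reorder the column `rem` against the previous column `prev`:
entry `i` is the `≺_{prev(i)}`-minimum of the remaining entries. -/
def reorderCol (n : ℕ) : List ℕ → List ℕ → List ℕ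
  | [], _ => []
  | _ :: _, [] => []
  | p :: prev', rem =>
    let m := circMin n p rem
    m :: reorderCol n prev' (rem.erase m)

def circOrdGo (n : ℕ) (prev : List ℕ) : List (List ℕ) → List (List ℕ)
  | [] => []
  | bj :: rest =>
    let cj := reorderCol n prev bj
    cj :: circOrdGo n cj rest

/-- Algorithm 3.2: `circ-ord`, applied to a list of columns over the alphabet `{1,...,n}`. -/
def circOrd (n : ℕ) : List (List ℕ) → List (List ℕ)
  | [] => []
  | b1 :: rest => b1 :: circOrdGo n b1 rest

/-- Arm length of the cell in column `j` (0-indexed), row `i` of the filling `c`. -/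
def arm (c : List (List ℕ)) (j i : ℕ) : ℕ :=
  ((List.range c.length).filter (fun l => decide (j < l) && decide (i < (c.getD l []).length))).length

/-- The sum of arm lengths over all descents of the filling `c`
(a descent is a cell with `c_j(i) > c_{j+1}(i)`). -/
def armSum (c : List (List ℕ)) : ℕ :=
  (List.range c.length).foldl (fun s j =>
    s + ((List.range ((c.getD (j+1) []).length)).foldl (fun t i =>
      t + if (c.getD (j+1) []).getD i 0 < (c.getD j []).getD i 0 then arm c j i else 0) 0)) 0

def insertBL (p : ℕ × ℕ) : List (ℕ × ℕ) → List (ℕ × ℕ)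
  | [] => [p]
  | q :: l => if p.1 > q.1 ∨ (p.1 = q.1 ∧ p.2 ≥ q.2) then p :: q :: l else q :: insertBL p l

/-- Sort biletters by decreasing upper letter, then decreasing lower letter. -/
def sortBL (l : List (ℕ × ℕ)) : List (ℕ × ℕ) := l.foldr insertBL []

/-- The word `cw₂(b)` of lower letters of the charge word of the filling `b`. -/
def cw2 (b : List (List ℕ)) : List ℕ :=
  (sortBL (((List.range b.length).map (fun j => (b.getD j []).map (fun k => (k, j+1)))).flatten)).map Prod.snd

end CO

/-! Generic tensor-product crystal combinatorics (signature rule), with the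
convention of the paper: `f` acts on the left factor iff `ε(b₁) ≥ φ(b₂)`. -/
namespace Cry

variable {K : Type*}

def phiT (eps phi : K → ℕ) : List K → ℕ
  | [] => 0
  | x :: r => phi x + (phiT eps phi r - eps x)

def epsT (eps phi : K → ℕ) : List K → ℕ
  | [] => 0
  | x :: r => epsT eps phi r + (eps x - phiT eps phi r)

/-- The raising operator on a tensor product (list) of atoms. -/
def eT (eps phi : K → ℕ) (eA : K → K) : List K → List K
  | [] => []
  | x :: r => if phiT eps phi r < eps x then eA x :: r else x :: eT eps phi eA r

/-- The lowering operator on a tensor product (list) of atoms. -/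
def fT (eps phi : K → ℕ) (fA : K → K) : List K → List K
  | [] => []
  | x :: r => if phiT eps phi r ≤ eps x then fA x :: r else x :: fT eps phi fA r

end Cry

/-! Type `C_n` Kashiwara–Nakashima columns, encoded over the alphabet `{1,...,2n}`
where the barred letter `z̄` is encoded as `2n+1-z`. -/
namespace TC

def insSorted : ℕ → List ℕ → List ℕ
  | x, [] => [x]
  | x, y :: l => if x ≤ y then x :: y :: l else y :: insSorted x l

def sortList (l : List ℕ) : List ℕ := l.foldr insSorted []

/-- The KN condition (Definition 2.1): a strictly increasing column with entries in
`{1,...,2n}` such that a pair `(z, z̄)` at positions `p < q` satisfies `q - p > k - z`. -/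
def IsKN (n : ℕ) (b : List ℕ) : Prop :=
  b.Chain' (· < ·) ∧ (∀ x ∈ b, 1 ≤ x ∧ x ≤ 2*n) ∧
  ∀ p q, p < q → q < b.length → b.getD p 0 ≤ n → b.getD q 0 = 2*n+1 - b.getD p 0 →
    b.length - b.getD p 0 < q - p

/-- The decreasing list `I = {z_1 > ... > z_r}` of unbarred letters `z`
such that both `z` and `z̄` occur in `b`. -/
def Icompute (n : ℕ) (b : List ℕ) : List ℕ :=
  (((List.range n).map (· + 1)).filter (fun z => b.contains z && b.contains (2*n+1-z))).reverse

/-- Greatest `t` with `1 ≤ t < bound`, `t ∉ b`, `t̄ ∉ b` (or `0` if none exists). -/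
def findT (n : ℕ) (b : List ℕ) (bound : ℕ) : ℕ :=
  ((List.range bound).filter
    (fun t => decide (1 ≤ t) && !(b.contains t) && !(b.contains (2*n+1-t)))).foldl max 0

def Jgo (n : ℕ) (b : List ℕ) : List ℕ → ℕ → List ℕ
  | [], _ => []
  | z :: I', prev => let t := findT n b (min prev z); t :: Jgo n b I' t

/-- The list `J = {t_1 > ... > t_r}` of Definition 2.2. -/
def Jcompute (n : ℕ) (b : List ℕ) : List ℕ := Jgo n b (Icompute n b) (n+1)

def applySubst (s : List (ℕ × ℕ)) (x : ℕ) : ℕ :=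
  match s.find? (fun p => p.1 == x) with
  | some p => p.2
  | none => x

/-- The left column `b^L` of the split column: replace each `z_i` by `t_i` and reorder. -/
def splitL (n : ℕ) (b : List ℕ) : List ℕ :=
  sortList (b.map (applySubst ((Icompute n b).zip (Jcompute n b))))

/-- The right column `b^R` of the split column: replace each `z̄_i` by `t̄_i` and reorder. -/
def splitR (n : ℕ) (b : List ℕ) : List ℕ :=
  sortList (b.map (applySubst
    (((Icompute n b).map (fun z => 2*n+1-z)).zip ((Jcompute n b).map (fun t => 2*n+1-t)))))

/-- The filling of the doubled shape `2μ` by split columns. -/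
def splitFilling (n : ℕ) (b : List (List ℕ)) : List (List ℕ) :=
  (b.map (fun col => [splitL n col, splitR n col])).flatten

/-- The type `C` charge (3.2): half the sum of arm lengths over descents of the
circular reordering of the split filling. -/
def chargeC (n : ℕ) (b : List (List ℕ)) : ℕ :=
  CO.armSum (CO.circOrd (2*n) (splitFilling n b)) / 2

/-- `ε_0` of a single KN column: `e_0` changes a `1` into `1̄`. -/
def eps0C (_n : ℕ) (x : List ℕ) : ℕ := if x.contains 1 then 1 else 0

/-- `φ_0` of a single KN column: `f_0` changes a `1̄` into `1`. -/
def phi0C (n : ℕ) (x : List ℕ) : ℕ := if x.contains (2*n) then 1 else 0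

/-- `e_0` on a single KN column: change the `1` into `1̄`. -/
def e0colC (n : ℕ) (x : List ℕ) : List ℕ := sortList ((x.erase 1) ++ [2*n])

/-- `f_0` on a single KN column: change the `1̄` into `1`. -/
def f0colC (n : ℕ) (x : List ℕ) : List ℕ := sortList ((x.erase (2*n)) ++ [1])

/-- `e_0` on a tensor product of KN columns, via the signature rule. -/
def e0TC (n : ℕ) : List (List ℕ) → List (List ℕ) := Cry.eT (eps0C n) (phi0C n) (e0colC n)

/-- `f_0` on a tensor product of KN columns, via the signature rule. -/
def f0TC (n : ℕ) : List (List ℕ) → List (List ℕ) := Cry.fT (eps0C n) (phi0C n) (f0colC n)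

/-- Letter-level `ε_i` for type `C_n^{(1)}`, `i = 0, 1, ..., n`. -/
def epsC (n i x : ℕ) : ℕ :=
  if i = 0 then (if x = 1 then 1 else 0)
  else if i = n then (if x = n+1 then 1 else 0)
  else if x = i+1 ∨ x = 2*n+1-i then 1 else 0

/-- Letter-level `φ_i` for type `C_n^{(1)}`. -/
def phiC (n i x : ℕ) : ℕ :=
  if i = 0 then (if x = 2*n then 1 else 0)
  else if i = n then (if x = n then 1 else 0)
  else if x = i ∨ x = 2*n-i then 1 else 0

/-- Letter-level `e_i` for type `C_n^{(1)}`. -/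
def eCl (n i x : ℕ) : ℕ :=
  if i = 0 then (if x = 1 then 2*n else x)
  else if i = n then (if x = n+1 then n else x)
  else if x = i+1 then i else if x = 2*n+1-i then 2*n-i else x

/-- Letter-level `f_i` for type `C_n^{(1)}`. -/
def fCl (n i x : ℕ) : ℕ :=
  if i = 0 then (if x = 2*n then 1 else x)
  else if i = n then (if x = n then n+1 else x)
  else if x = i then i+1 else if x = 2*n-i then 2*n+1-i else x

/-- `ε_i` of a KN column (via its reading word). -/
def colEps (n i : ℕ) (c : List ℕ) : ℕ := Cry.epsT (epsC n i) (phiC n i) c.reverse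

/-- `φ_i` of a KN column (via its reading word). -/
def colPhi (n i : ℕ) (c : List ℕ) : ℕ := Cry.phiT (epsC n i) (phiC n i) c.reverse

/-- `e_i` on a KN column (via its reading word). -/
def colE (n i : ℕ) (c : List ℕ) : List ℕ :=
  sortList (Cry.eT (epsC n i) (phiC n i) (eCl n i) c.reverse)

/-- `f_i` on a KN column (via its reading word). -/
def colF (n i : ℕ) (c : List ℕ) : List ℕ :=
  sortList (Cry.fT (epsC n i) (phiC n i) (fCl n i) c.reverse)

end TC

/-- `t` is an admissible letter below `bound` for the splitting of the column `b`:
`1 ≤ t < bound`, and neither `t` nor `t̄` occurs in `b`. -/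
def goodAt (n : ℕ) (b : List ℕ) (bound t : ℕ) : Prop :=
  1 ≤ t ∧ t < bound ∧ t ∉ b ∧ (2*n+1-t) ∉ b

/-- `SplitSeq n b I prev J` holds iff `J` is the list of letters `t_1 > t_2 > ⋯`
required by the splitting procedure (Definition 2.2) for the list `I` of doubled
letters `z_1 > z_2 > ⋯`, where each `t_i` is the greatest admissible letter
smaller than `min (t_{i-1}, z_i)`. -/
def SplitSeq (n : ℕ) (b : List ℕ) : List ℕ → ℕ → List ℕ → Prop
  | [], _, J => J = []
  | z :: I', prev, J =>
    ∃ t J', J = t :: J' ∧ goodAt n b (min prev z) t ∧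
      (∀ s, goodAt n b (min prev z) s → s ≤ t) ∧ SplitSeq n b I' t J'


namespace KNsplit

open Finset

/-- The set of admissible ("free") letters strictly below `m`. -/
def goodSet (n : ℕ) (b : List ℕ) (m : ℕ) : Finset ℕ :=
  (Finset.Ioo 0 m).filter (fun t => t ∉ b ∧ (2*n+1-t) ∉ b)

lemma mem_goodSet (n : ℕ) (b : List ℕ) {m t : ℕ} :
    t ∈ goodSet n b m ↔ goodAt n b m t := by
  simp only [goodSet, Finset.mem_filter, Finset.mem_Ioo, goodAt]
  tauto

lemma goodSet_mono (n : ℕ) (b : List ℕ) {m m' : ℕ} (h : m ≤ m') :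
    goodSet n b m ⊆ goodSet n b m' := by
  intro t ht
  simp only [goodSet, Finset.mem_filter, Finset.mem_Ioo] at *
  exact ⟨⟨ht.1.1, lt_of_lt_of_le ht.1.2 h⟩, ht.2⟩

lemma exSeq (n : ℕ) (b : List ℕ) : ∀ (I : List ℕ) (prev : ℕ),
    (∀ j, j < I.length → I.length - j ≤ (goodSet n b (min prev (I.getD j 0))).card) →
    ∃ J, SplitSeq n b I prev J := by
  intro I
  induction I with
  | nil => exact fun _ _ => ⟨[], rfl⟩
  | cons z I' ih =>
    intro prev h
    have h0 := h 0 (Nat.succ_pos _)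
    simp only [List.getD_cons_zero, List.length_cons, Nat.sub_zero] at h0
    have hne : (goodSet n b (min prev z)).Nonempty := Finset.card_pos.mp (by omega)
    set t := (goodSet n b (min prev z)).max' hne with htdef
    have htmem := (goodSet n b (min prev z)).max'_mem hne
    have htmax : ∀ s ∈ goodSet n b (min prev z), s ≤ t := fun s hs => Finset.le_max' _ s hs
    have htlt : t < min prev z := by
      have := (mem_goodSet n b).mp htmem
      exact this.2.1
    have hterase : (goodSet n b (min prev z)).erase t ⊆ goodSet n b t := by
      intro s hs
      obtain ⟨hne', hs'⟩ := Finset.mem_erase.mp hs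
      have hle := htmax s hs'
      simp only [goodSet, Finset.mem_filter, Finset.mem_Ioo] at *
      exact ⟨⟨hs'.1.1, lt_of_le_of_ne hle hne'⟩, hs'.2⟩
    have hcond : ∀ j, j < I'.length → I'.length - j ≤ (goodSet n b (min t (I'.getD j 0))).card := by
      intro j hj
      rcases le_or_gt t (I'.getD j 0) with hc | hc
      · rw [min_eq_left hc]
        have hcard := Finset.card_le_card hterase
        rw [Finset.card_erase_of_mem htmem] at hcard
        omega
      · rw [min_eq_right hc.le]
        have hle : I'.getD j 0 < prev := by omega
        have hstep := h (j+1) (by simpa using Nat.succ_lt_succ hj)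
        simp only [List.getD_cons_succ, List.length_cons] at hstep
        rw [min_eq_right hle.le] at hstep
        omega
    obtain ⟨J', hJ'⟩ := ih t hcond
    exact ⟨t :: J', t, J', rfl, (mem_goodSet n b).mp htmem,
      fun s hs => htmax s ((mem_goodSet n b).mpr hs), hJ'⟩

lemma revSeq (n : ℕ) (b : List ℕ) : ∀ (I : List ℕ) (prev : ℕ) (J : List ℕ),
    SplitSeq n b I prev J →
    ∀ j, j < I.length → I.length - j ≤ (goodSet n b (min prev (I.getD j 0))).card := by
  intro I
  induction I with
  | nil => intro _ _ _ j hj; simp at hj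
  | cons z I' ih =>
    intro prev J hJ j hj
    obtain ⟨t, J', rfl, hgood, hmax, hrest⟩ := hJ
    have htmem : t ∈ goodSet n b (min prev z) := (mem_goodSet n b).mpr hgood
    have htlt : t < min prev z := hgood.2.1
    match j with
    | 0 =>
      simp only [List.getD_cons_zero, List.length_cons, Nat.sub_zero]
      have hsub : insert t (goodSet n b t) ⊆ goodSet n b (min prev z) := by
        intro s hs
        rcases Finset.mem_insert.mp hs with rfl | hs'
        · exact htmem
        · exact (goodSet_mono n b htlt.le) hs'
      have hcard := Finset.card_le_card hsub
      rw [Finset.card_insert_of_notMem (by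
        simp [goodSet, Finset.mem_filter, Finset.mem_Ioo])] at hcard
      match I', hrest with
      | [], _ => simp only [List.length_nil, List.length_cons]; omega
      | z' :: I'', hrest =>
        have hih := ih t J' hrest 0 (Nat.succ_pos _)
        simp only [List.getD_cons_zero, List.length_cons, Nat.sub_zero] at hih
        have hmono := Finset.card_le_card (goodSet_mono n b (min_le_left t z'))
        simp only [List.length_cons]
        omega
    | j+1 =>
      have hih := ih t J' hrest j (by
        simp only [List.length_cons] at hj
        omega)
      have hmono := Finset.card_le_card
        (goodSet_mono n b (show min t (I'.getD j 0) ≤ min prev (I'.getD j 0) by omega))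
      simp only [List.getD_cons_succ, List.length_cons]
      omega

lemma uniqSeq (n : ℕ) (b : List ℕ) : ∀ (I : List ℕ) (prev : ℕ) (J J' : List ℕ),
    SplitSeq n b I prev J → SplitSeq n b I prev J' → J = J' := by
  intro I
  induction I with
  | nil => intro _ _ _ h h'; rw [show SplitSeq n b [] = fun _ J => J = [] from rfl] at h h'; rw [h, h']
  | cons z I' ih =>
    intro prev J J' h h'
    obtain ⟨t, K, rfl, hg, hm, hr⟩ := h
    obtain ⟨t', K', rfl, hg', hm', hr'⟩ := h'
    have ht : t = t' := le_antisymm (hm' t hg) (hm t' hg')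
    subst ht
    rw [ih t K K' hr hr']

lemma P1 {l : List ℕ} (hinc : l.Chain' (· < ·)) (h1 : ∀ x ∈ l, 1 ≤ x)
    {p : ℕ} (hp : p < l.length) :
    ((Finset.Ioo 0 (l.getD p 0)).filter (fun t => t ∈ l)).card = p := by
  have hpw := List.isChain_iff_pairwise.mp hinc
  have hmono : ∀ i j, ∀ (_ : i < l.length) (_ : j < l.length), i < j → l[i] < l[j] := by
    intro i j hi hj hij
    exact (List.pairwise_iff_getElem.mp hpw) i j hi hj hij
  have hnd : l.Nodup := hpw.imp (fun h => Nat.ne_of_lt h)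
  rw [List.getD_eq_getElem l 0 hp]
  refine Eq.trans (Finset.card_nbij' (fun a => l.idxOf a) (fun i => l.getD i 0)
    ?_ ?_ ?_ ?_) (Finset.card_range p)
  · intro a ha
    dsimp only
    simp only [Finset.mem_coe, Finset.mem_filter, Finset.mem_Ioo] at ha
    obtain ⟨⟨ha0, halt⟩, hamem⟩ := ha
    have hidx : l.idxOf a < l.length := List.idxOf_lt_length_iff.mpr hamem
    have hval : l.getD (l.idxOf a) 0 = a := by
      rw [List.getD_eq_getElem _ _ hidx]
      exact List.getElem_idxOf hidx
    have hgp : l.getD p 0 = l[p] := List.getD_eq_getElem l 0 hp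
    rw [Finset.mem_coe, Finset.mem_range]
    by_contra hcon
    push_neg at hcon
    rcases eq_or_lt_of_le hcon with heq | hlt
    · rw [← heq] at hval; omega
    · have hlt2 := hmono p (l.idxOf a) hp hidx hlt
      have hgi : l.getD (l.idxOf a) 0 = l[l.idxOf a] := List.getD_eq_getElem l 0 hidx
      omega
  · intro i hi
    dsimp only
    rw [Finset.mem_coe, Finset.mem_range] at hi
    have hil : i < l.length := hi.trans hp
    rw [List.getD_eq_getElem l 0 hil]
    simp only [Finset.mem_coe, Finset.mem_filter, Finset.mem_Ioo]
    exact ⟨⟨h1 _ (List.getElem_mem _), hmono i p hil hp hi⟩, List.getElem_mem _⟩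
  · intro a ha
    dsimp only
    simp only [Finset.mem_coe, Finset.mem_filter] at ha
    have hidx : l.idxOf a < l.length := List.idxOf_lt_length_iff.mpr ha.2
    rw [List.getD_eq_getElem l 0 hidx]
    exact List.getElem_idxOf hidx
  · intro i hi
    dsimp only
    rw [Finset.mem_coe, Finset.mem_range] at hi
    have hil : i < l.length := hi.trans hp
    rw [List.getD_eq_getElem l 0 hil]
    exact List.Nodup.idxOf_getElem hnd i hil

lemma Q1 (n : ℕ) {l : List ℕ} (hinc : l.Chain' (· < ·)) (h2 : ∀ x ∈ l, x ≤ 2*n)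
    {q : ℕ} (hq : q < l.length) :
    ((Finset.Ioo 0 (2*n+1 - l.getD q 0)).filter (fun t => (2*n+1-t) ∈ l)).card + q + 1
      = l.length := by
  have hpw := List.isChain_iff_pairwise.mp hinc
  have hmono : ∀ i j, ∀ (_ : i < l.length) (_ : j < l.length), i < j → l[i] < l[j] := by
    intro i j hi hj hij
    exact (List.pairwise_iff_getElem.mp hpw) i j hi hj hij
  have hnd : l.Nodup := hpw.imp (fun h => Nat.ne_of_lt h)
  have hql : l[q] ≤ 2*n := h2 _ (List.getElem_mem _)
  have key : ((Finset.Ioo 0 (2*n+1 - l.getD q 0)).filter (fun t => (2*n+1-t) ∈ l)).card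
      = (Finset.Ioo q l.length).card := by
    rw [List.getD_eq_getElem l 0 hq]
    apply Finset.card_nbij' (fun a => l.idxOf (2*n+1-a)) (fun i => 2*n+1 - l.getD i 0)
    · intro a ha
      dsimp only
      simp only [Finset.mem_coe, Finset.mem_filter, Finset.mem_Ioo] at ha
      obtain ⟨⟨ha0, halt⟩, hamem⟩ := ha
      have hidx : l.idxOf (2*n+1-a) < l.length := List.idxOf_lt_length_iff.mpr hamem
      have hval : l.getD (l.idxOf (2*n+1-a)) 0 = 2*n+1-a := by
        rw [List.getD_eq_getElem _ _ hidx]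
        exact List.getElem_idxOf hidx
      have hgq : l.getD q 0 = l[q] := List.getD_eq_getElem l 0 hq
      rw [Finset.mem_coe, Finset.mem_Ioo]
      refine ⟨?_, hidx⟩
      by_contra hcon
      push_neg at hcon
      rcases eq_or_lt_of_le hcon with heq | hlt
      · rw [heq] at hval; omega
      · have hlt2 := hmono (l.idxOf (2*n+1-a)) q hidx hq hlt
        have hgi : l.getD (l.idxOf (2*n+1-a)) 0 = l[l.idxOf (2*n+1-a)] :=
          List.getD_eq_getElem l 0 hidx
        omega
    · intro i hi
      dsimp only
      rw [Finset.mem_coe, Finset.mem_Ioo] at hi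
      rw [List.getD_eq_getElem l 0 hi.2]
      simp only [Finset.mem_coe, Finset.mem_filter, Finset.mem_Ioo]
      have hgt : l[q] < l[i] := hmono q i hq hi.2 hi.1
      have hle : l[i] ≤ 2*n := h2 _ (List.getElem_mem _)
      refine ⟨⟨by omega, by omega⟩, ?_⟩
      have : 2*n+1 - (2*n+1 - l[i]) = l[i] := by omega
      rw [this]
      exact List.getElem_mem _
    · intro a ha
      simp only [Finset.mem_coe, Finset.mem_filter, Finset.mem_Ioo] at ha
      obtain ⟨⟨ha0, halt⟩, hamem⟩ := ha
      have hidx : l.idxOf (2*n+1-a) < l.length := List.idxOf_lt_length_iff.mpr hamem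
      have hval : l[l.idxOf (2*n+1-a)] = 2*n+1-a := List.getElem_idxOf hidx
      dsimp only
      rw [List.getD_eq_getElem l 0 hidx, hval]
      omega
    · intro i hi
      rw [Finset.mem_coe, Finset.mem_Ioo] at hi
      dsimp only
      rw [List.getD_eq_getElem l 0 hi.2]
      have hle : l[i] ≤ 2*n := h2 _ (List.getElem_mem _)
      have : 2*n+1 - (2*n+1 - l[i]) = l[i] := by omega
      rw [this]
      exact List.Nodup.idxOf_getElem hnd i hi.2
  rw [key, Nat.card_Ioo]
  omega

lemma cnt (n : ℕ) (b : List ℕ) (z : ℕ) :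
    (goodSet n b z).card
      + ((Finset.Ioo 0 z).filter (fun t => t ∈ b)).card
      + ((Finset.Ioo 0 z).filter (fun t => (2*n+1-t) ∈ b)).card
    = (z - 1) + ((Finset.Ioo 0 z).filter (fun t => t ∈ b ∧ (2*n+1-t) ∈ b)).card := by
  have h1 : ((Finset.Ioo 0 z).filter (fun t => t ∈ b ∨ (2*n+1-t) ∈ b)).card
      + (goodSet n b z).card = z - 1 := by
    have hfil := Finset.card_filter_add_card_filter_not
      (s := Finset.Ioo 0 z) (p := fun t => t ∈ b ∨ (2*n+1-t) ∈ b)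
    rw [Nat.card_Ioo] at hfil
    have hg : goodSet n b z
        = (Finset.Ioo 0 z).filter (fun t => ¬(t ∈ b ∨ (2*n+1-t) ∈ b)) := by
      apply Finset.filter_congr
      intro t _
      simp [not_or]
    rw [hg]
    omega
  have h2 := Finset.card_union_add_card_inter
    ((Finset.Ioo 0 z).filter (fun t => t ∈ b)) ((Finset.Ioo 0 z).filter (fun t => (2*n+1-t) ∈ b))
  rw [← Finset.filter_or, ← Finset.filter_and] at h2
  omega

lemma mem_Icompute (n : ℕ) (b : List ℕ) {z : ℕ} :
    z ∈ TC.Icompute n b ↔ (1 ≤ z ∧ z ≤ n ∧ z ∈ b ∧ (2*n+1-z) ∈ b) := by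
  simp [TC.Icompute, List.mem_filter]
  constructor
  · rintro ⟨⟨a, ha, rfl⟩, h1, h2⟩
    exact ⟨by omega, by omega, h1, h2⟩
  · rintro ⟨h0, hn, h1, h2⟩
    exact ⟨⟨z-1, by omega, by omega⟩, h1, h2⟩

lemma Icompute_rev_pairwise (n : ℕ) (b : List ℕ) :
    (TC.Icompute n b).reverse.Pairwise (· < ·) := by
  rw [TC.Icompute, List.reverse_reverse]
  apply List.Pairwise.filter
  rw [List.pairwise_map]
  exact (List.pairwise_lt_range (n := n)).imp (by omega)

lemma Dcard (n : ℕ) (b : List ℕ) {j : ℕ} (hj : j < (TC.Icompute n b).length) :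
    ((Finset.Ioo 0 ((TC.Icompute n b).getD j 0)).filter
        (fun t => t ∈ b ∧ (2*n+1-t) ∈ b)).card
      = (TC.Icompute n b).length - 1 - j := by
  set I := TC.Icompute n b with hIdef
  have hz : I.getD j 0 ∈ I := by
    rw [List.getD_eq_getElem _ _ hj]
    exact List.getElem_mem _
  have hzn : I.getD j 0 ≤ n := ((mem_Icompute n b).mp hz).2.1
  have hstep : ((Finset.Ioo 0 (I.getD j 0)).filter (fun t => t ∈ b ∧ (2*n+1-t) ∈ b))
      = ((Finset.Ioo 0 (I.getD j 0)).filter (fun t => t ∈ I.reverse)) := by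
    apply Finset.filter_congr
    intro t ht
    simp only [Finset.mem_Ioo] at ht
    simp only [List.mem_reverse]
    rw [mem_Icompute n b]
    constructor
    · intro h; exact ⟨by omega, by omega, h.1, h.2⟩
    · intro h; exact ⟨h.2.2.1, h.2.2.2⟩
  have hjr : I.length - 1 - j < I.reverse.length := by
    rw [List.length_reverse]; omega
  have hrev : I.reverse.getD (I.length - 1 - j) 0 = I.getD j 0 := by
    rw [List.getD_eq_getElem _ 0 hjr, List.getD_eq_getElem _ 0 hj, List.getElem_reverse]
    congr 1
    omega
  rw [hstep, ← hrev]
  exact P1 (List.isChain_iff_pairwise.mpr (Icompute_rev_pairwise n b))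
    (fun x hx => ((mem_Icompute n b).mp (List.mem_reverse.mp hx)).1) hjr

lemma kn_to_good (n : ℕ) (b : List ℕ)
    (hinc : b.Chain' (· < ·)) (hrange : ∀ x ∈ b, 1 ≤ x ∧ x ≤ 2*n)
    (hKN : ∀ p q, p < q → q < b.length → b.getD p 0 ≤ n →
        b.getD q 0 = 2*n+1 - b.getD p 0 → b.length - b.getD p 0 < q - p)
    {z : ℕ} (h1 : 1 ≤ z) (hn : z ≤ n) (hz : z ∈ b) (hzb : (2*n+1-z) ∈ b) :
    ((Finset.Ioo 0 z).filter (fun t => t ∈ b ∧ (2*n+1-t) ∈ b)).card + 1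
      ≤ (goodSet n b z).card := by
  have hpw := List.isChain_iff_pairwise.mp hinc
  have hmono : ∀ i j, ∀ (_ : i < b.length) (_ : j < b.length), i < j → b[i] < b[j] := by
    intro i j hi hj hij
    exact (List.pairwise_iff_getElem.mp hpw) i j hi hj hij
  have hpl : b.idxOf z < b.length := List.idxOf_lt_length_iff.mpr hz
  have hql : b.idxOf (2*n+1-z) < b.length := List.idxOf_lt_length_iff.mpr hzb
  have hbp : b.getD (b.idxOf z) 0 = z := by
    rw [List.getD_eq_getElem b 0 hpl]
    exact List.getElem_idxOf hpl
  have hbq : b.getD (b.idxOf (2*n+1-z)) 0 = 2*n+1-z := by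
    rw [List.getD_eq_getElem b 0 hql]
    exact List.getElem_idxOf hql
  have hpq : b.idxOf z < b.idxOf (2*n+1-z) := by
    by_contra hcon
    push_neg at hcon
    rcases eq_or_lt_of_le hcon with heq | hlt
    · rw [heq] at hbq; omega
    · have hlt2 := hmono _ _ hql hpl hlt
      have hg1 : b.getD (b.idxOf z) 0 = b[b.idxOf z] := List.getD_eq_getElem b 0 hpl
      have hg2 : b.getD (b.idxOf (2*n+1-z)) 0 = b[b.idxOf (2*n+1-z)] :=
        List.getD_eq_getElem b 0 hql
      omega
  have hKNz := hKN _ _ hpq hql (by rw [hbp]; omega) (by rw [hbp, hbq])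
  rw [hbp] at hKNz
  have hP := P1 hinc (fun x hx => (hrange x hx).1) hpl
  rw [hbp] at hP
  have hQ := Q1 n hinc (fun x hx => (hrange x hx).2) hql
  rw [hbq] at hQ
  have h2 : 2*n+1 - (2*n+1-z) = z := by omega
  rw [h2] at hQ
  have hc := cnt n b z
  omega

lemma good_to_kn (n : ℕ) (b : List ℕ)
    (hinc : b.Chain' (· < ·)) (hrange : ∀ x ∈ b, 1 ≤ x ∧ x ≤ 2*n)
    (h : ∀ z, 1 ≤ z → z ≤ n → z ∈ b → (2*n+1-z) ∈ b →
      ((Finset.Ioo 0 z).filter (fun t => t ∈ b ∧ (2*n+1-t) ∈ b)).card + 1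
        ≤ (goodSet n b z).card) :
    ∀ p q, p < q → q < b.length → b.getD p 0 ≤ n → b.getD q 0 = 2*n+1 - b.getD p 0 →
      b.length - b.getD p 0 < q - p := by
  intro p q hpq hql hpn hqv
  have hpl : p < b.length := hpq.trans hql
  rw [List.getD_eq_getElem b 0 hpl] at hpn hqv ⊢
  rw [List.getD_eq_getElem b 0 hql] at hqv
  have hz : b[p] ∈ b := List.getElem_mem _
  have hz1 : 1 ≤ b[p] := (hrange _ hz).1
  have hzb : (2*n+1-b[p]) ∈ b := by
    rw [← hqv]
    exact List.getElem_mem _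
  have hh := h b[p] hz1 hpn hz hzb
  have hP := P1 hinc (fun x hx => (hrange x hx).1) hpl
  rw [List.getD_eq_getElem b 0 hpl] at hP
  have hQ := Q1 n hinc (fun x hx => (hrange x hx).2) hql
  rw [List.getD_eq_getElem b 0 hql, hqv] at hQ
  have h2 : 2*n+1 - (2*n+1-b[p]) = b[p] := by
    have : b[p] ≤ 2*n := (hrange _ hz).2
    omega
  rw [h2] at hQ
  have hc := cnt n b b[p]
  omega

end KNsplit

/-- a strictly increasing column `b` of height `k` over the alphabet
`[n̄]` satisfies the KN condition iff it can be split; moreover the splitting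
list `J` is unique. -/
theorem KN_iff_splittable (n k : ℕ) (b : List ℕ)
    (hlen : b.length = k) (hinc : b.Chain' (· < ·))
    (hrange : ∀ x ∈ b, 1 ≤ x ∧ x ≤ 2*n) :
    ((∀ p q, p < q → q < b.length → b.getD p 0 ≤ n →
        b.getD q 0 = 2*n+1 - b.getD p 0 → k - b.getD p 0 < q - p) ↔
      ∃ J, SplitSeq n b (TC.Icompute n b) (n+1) J) ∧
    (∀ J J', SplitSeq n b (TC.Icompute n b) (n+1) J →
      SplitSeq n b (TC.Icompute n b) (n+1) J' → J = J') := by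
  subst hlen
  constructor
  · constructor
    · intro hKN
      apply KNsplit.exSeq
      intro j hj
      have hz : (TC.Icompute n b).getD j 0 ∈ TC.Icompute n b := by
        rw [List.getD_eq_getElem _ _ hj]
        exact List.getElem_mem _
      obtain ⟨h1, hn', hzb1, hzb2⟩ := (KNsplit.mem_Icompute n b).mp hz
      rw [min_eq_right (by omega)]
      have hkey := KNsplit.kn_to_good n b hinc hrange hKN h1 hn' hzb1 hzb2
      rw [KNsplit.Dcard n b hj] at hkey
      omega
    · rintro ⟨J, hJ⟩
      apply KNsplit.good_to_kn n b hinc hrange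
      intro z h1 hn' hz hzb
      have hzI : z ∈ TC.Icompute n b := (KNsplit.mem_Icompute n b).mpr ⟨h1, hn', hz, hzb⟩
      have hjl : (TC.Icompute n b).idxOf z < (TC.Icompute n b).length :=
        List.idxOf_lt_length_iff.mpr hzI
      have hIj : (TC.Icompute n b).getD ((TC.Icompute n b).idxOf z) 0 = z := by
        rw [List.getD_eq_getElem _ _ hjl]
        exact List.getElem_idxOf hjl
      have hrev := KNsplit.revSeq n b (TC.Icompute n b) (n+1) J hJ _ hjl
      rw [hIj, min_eq_right (by omega)] at hrev
      have hD := KNsplit.Dcard n b hjl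
      rw [hIj] at hD
      rw [hD]
      omega
  · exact fun J J' h h' => KNsplit.uniqSeq n b (TC.Icompute n b) (n+1) J J' h h'
end

section
/- In a split KN column pair c_j^L c_j^R arising from the type C circular reordering algorithm applied to a tensor product of KN columns, there is never a descent within the pair, i.e., c_j^L(i) ≤ c_j^R(i) for all rows i. Consequently, if c_j^L(i) = 1 then c_j^R(i) = 1. -/
section AuxProof

open List

namespace KNAux

/-- Pointwise 2+2 counting identity. -/
lemma countP_quad (p q r s : ℕ → Bool) :
    ∀ l : List ℕ, (∀ u ∈ l, ((if p u then 1 else 0) + (if q u then 1 else 0) : ℕ) =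
      (if r u then 1 else 0) + (if s u then 1 else 0)) →
    l.countP p + l.countP q = l.countP r + l.countP s
  | [], _ => rfl
  | a :: l, h => by
    have h1 := h a (by simp)
    have h2 := countP_quad p q r s l (fun u hu => h u (by simp [hu]))
    simp only [List.countP_cons]
    omega

lemma foldl_max_spec : ∀ (l : List ℕ) (a : ℕ),
    (l.foldl max a = a ∨ l.foldl max a ∈ l) ∧ a ≤ l.foldl max a ∧ ∀ x ∈ l, x ≤ l.foldl max a
  | [], a => by simp
  | b :: l, a => by
    obtain ⟨h1, h2, h3⟩ := foldl_max_spec l (max a b)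
    refine ⟨?_, ?_, ?_⟩
    · rcases h1 with h | h
      · rcases max_choice a b with hc | hc <;> rw [List.foldl_cons, h, hc] <;> simp
      · simp [List.foldl_cons, h]
    · exact le_trans (le_max_left a b) h2
    · intro x hx
      rcases List.mem_cons.1 hx with rfl | hx
      · exact le_trans (le_max_right a x) h2
      · exact h3 x hx

lemma foldl_circ_spec (n i : ℕ) :
    ∀ (l : List ℕ) (a : ℕ),
      (l.foldl (fun acc x => if CO.circKey n i x < CO.circKey n i acc then x else acc) a = a ∨
       l.foldl (fun acc x => if CO.circKey n i x < CO.circKey n i acc then x else acc) a ∈ l) ∧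
      CO.circKey n i (l.foldl (fun acc x => if CO.circKey n i x < CO.circKey n i acc then x else acc) a)
        ≤ CO.circKey n i a ∧
      ∀ x ∈ l, CO.circKey n i (l.foldl (fun acc x => if CO.circKey n i x < CO.circKey n i acc then x else acc) a)
        ≤ CO.circKey n i x
  | [], a => by simp
  | b :: l, a => by
    simp only [List.foldl_cons]
    obtain ⟨h1, h2, h3⟩ := foldl_circ_spec n i l (if CO.circKey n i b < CO.circKey n i a then b else a)
    by_cases hk : CO.circKey n i b < CO.circKey n i a
    · rw [if_pos hk] at h1 h2 h3 ⊢
      refine ⟨?_, le_trans h2 (le_of_lt hk), ?_⟩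
      · rcases h1 with h | h
        · exact Or.inr (by simp [h])
        · exact Or.inr (List.mem_cons_of_mem _ h)
      · intro x hx
        rcases List.mem_cons.1 hx with rfl | hx
        · exact h2
        · exact h3 x hx
    · rw [if_neg hk] at h1 h2 h3 ⊢
      refine ⟨?_, h2, ?_⟩
      · rcases h1 with h | h
        · exact Or.inl h
        · exact Or.inr (List.mem_cons_of_mem _ h)
      · intro x hx
        rcases List.mem_cons.1 hx with rfl | hx
        · exact le_trans h2 (not_lt.1 hk)
        · exact h3 x hx

lemma circMin_mem {n i : ℕ} {l : List ℕ} (hl : l ≠ []) : CO.circMin n i l ∈ l := by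
  obtain ⟨b, t, rfl⟩ := List.exists_cons_of_ne_nil hl
  have := (foldl_circ_spec n i (b :: t) ((b :: t).headD 0)).1
  rcases this with h | h
  · rw [CO.circMin, h]; simp
  · exact h

lemma circMin_key_le {n i : ℕ} {l : List ℕ} :
    ∀ x ∈ l, CO.circKey n i (CO.circMin n i l) ≤ CO.circKey n i x :=
  (foldl_circ_spec n i l (l.headD 0)).2.2

lemma circKey_of_ge {N t x : ℕ} (h1 : 1 ≤ t) (h2 : t ≤ x) (h3 : x ≤ N) :
    CO.circKey N t x = x - t := by
  unfold CO.circKey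
  have e : x + N - t = (x - t) + N := by omega
  rw [e, Nat.add_mod_right, Nat.mod_eq_of_lt (by omega)]

lemma circKey_of_lt {N t x : ℕ} (h2 : x < t) (h3 : t ≤ N) :
    CO.circKey N t x = x + N - t := by
  unfold CO.circKey; exact Nat.mod_eq_of_lt (by omega)

lemma circMin_ge {N t : ℕ} {l : List ℕ} (ht : 1 ≤ t) (htN : t ≤ N)
    (hb : ∀ x ∈ l, 1 ≤ x ∧ x ≤ N) (hw : ∃ x ∈ l, t ≤ x) :
    CO.circMin N t l ∈ l ∧ t ≤ CO.circMin N t l ∧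
      ∀ x ∈ l, t ≤ x → CO.circMin N t l ≤ x := by
  obtain ⟨w, hwl, hwt⟩ := hw
  have hl : l ≠ [] := List.ne_nil_of_mem hwl
  have hm : CO.circMin N t l ∈ l := circMin_mem hl
  set m := CO.circMin N t l with hmdef
  have hmb := hb m hm
  have hwb := hb w hwl
  have hkw : CO.circKey N t w = w - t := circKey_of_ge ht hwt hwb.2
  have hkey := circMin_key_le (n := N) (i := t) w hwl
  rw [hkw] at hkey
  have htm : t ≤ m := by
    by_contra hlt
    push_neg at hlt
    rw [circKey_of_lt hlt htN] at hkey
    omega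
  refine ⟨hm, htm, ?_⟩
  intro x hx hxt
  have hxb := hb x hx
  have hk := circMin_key_le (n := N) (i := t) x hx
  rw [circKey_of_ge ht hxt hxb.2, circKey_of_ge ht htm hmb.2] at hk
  omega

lemma reorderCol_length (N : ℕ) :
    ∀ (prev rem : List ℕ), (CO.reorderCol N prev rem).length = min prev.length rem.length
  | [], rem => by simp [CO.reorderCol]
  | p :: prev', [] => by simp [CO.reorderCol]
  | p :: prev', r :: rem' => by
    have hmem : CO.circMin N p (r :: rem') ∈ r :: rem' := circMin_mem (by simp)
    have hlen := List.length_erase_of_mem hmem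
    have := reorderCol_length N prev' ((r :: rem').erase (CO.circMin N p (r :: rem')))
    simp only [CO.reorderCol]
    simp only [List.length_cons, this, hlen]
    have : 0 < (r :: rem').length := by simp
    simp only [List.length_cons] at this ⊢
    omega

lemma reorderCol_subperm (N : ℕ) :
    ∀ (prev rem : List ℕ), (CO.reorderCol N prev rem).Subperm rem
  | [], rem => by simp [CO.reorderCol]
  | p :: prev', [] => by simp [CO.reorderCol]
  | p :: prev', r :: rem' => by
    have hmem : CO.circMin N p (r :: rem') ∈ r :: rem' := circMin_mem (by simp)
    have ih := reorderCol_subperm N prev' ((r :: rem').erase (CO.circMin N p (r :: rem')))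
    show (CO.circMin N p (r :: rem') :: _).Subperm _
    have h1 := (List.subperm_cons (CO.circMin N p (r :: rem'))).mpr ih
    exact h1.trans (List.perm_cons_erase hmem).symm.subperm

lemma greedy (N : ℕ) :
    ∀ (prev rem : List ℕ),
      (∀ x ∈ prev, 1 ≤ x ∧ x ≤ N) → (∀ x ∈ rem, 1 ≤ x ∧ x ≤ N) →
      (∀ v, prev.countP (fun x => decide (v ≤ x)) ≤ rem.countP (fun x => decide (v ≤ x))) →
      ∀ i, i < prev.length →
        prev.getD i 0 ≤ (CO.reorderCol N prev rem).getD i 0 ∧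
        (prev.count 1 ≤ rem.count 1 → prev.getD i 0 = 1 →
          (CO.reorderCol N prev rem).getD i 0 = 1)
  | [], rem, _, _, _, i, hi => by simp at hi
  | p :: prev', rem, hbp, hbr, hdom, i, hi => by
    have hp := hbp p (by simp)
    have hpos : 0 < rem.countP (fun x => decide (p ≤ x)) := by
      have := hdom p
      have : 0 < (p :: prev').countP (fun x => decide (p ≤ x)) := by
        simp [List.countP_cons]
      omega
    have hex : ∃ x ∈ rem, p ≤ x := by
      obtain ⟨a, ha, hpa⟩ := List.countP_pos_iff.1 hpos
      exact ⟨a, ha, by simpa using hpa⟩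
    obtain ⟨r, rem'', hrem⟩ : ∃ r rem'', rem = r :: rem'' := by
      obtain ⟨a, ha, _⟩ := hex
      exact List.exists_cons_of_ne_nil (List.ne_nil_of_mem ha)
    subst hrem
    obtain ⟨hmmem, hmge, hmmin⟩ := circMin_ge hp.1 hp.2 hbr hex
    set m := CO.circMin N p (r :: rem'') with hm
    have hre : CO.reorderCol N (p :: prev') (r :: rem'') =
        m :: CO.reorderCol N prev' ((r :: rem'').erase m) := rfl
    have hperm : (r :: rem'') ~ m :: (r :: rem'').erase m := List.perm_cons_erase hmmem
    -- one-count fact, used in both branches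
    have hcnt1 : (p :: prev').count 1 ≤ (r :: rem'').count 1 → p = 1 → m = 1 := by
      intro hc hp1
      have h1mem : (1 : ℕ) ∈ r :: rem'' := by
        rw [← List.count_pos_iff]
        have : 0 < (p :: prev').count 1 := by
          rw [List.count_cons]
          simp [hp1]
        omega
      have := hmmin 1 h1mem (by omega)
      omega
    match i with
    | 0 =>
      constructor
      · simpa [hre] using hmge
      · intro hc hp1
        simp only [List.getD_cons_zero] at hp1
        simp only [hre, List.getD_cons_zero]
        exact hcnt1 hc hp1
    | Nat.succ j =>
      have hbr' : ∀ x ∈ (r :: rem'').erase m, 1 ≤ x ∧ x ≤ N :=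
        fun x hx => hbr x (List.mem_of_mem_erase hx)
      have hdom' : ∀ v, prev'.countP (fun x => decide (v ≤ x)) ≤
          ((r :: rem'').erase m).countP (fun x => decide (v ≤ x)) := by
        intro v
        have heq : (r :: rem'').countP (fun x => decide (v ≤ x)) =
            (if v ≤ m then 1 else 0) + ((r :: rem'').erase m).countP (fun x => decide (v ≤ x)) := by
          rw [hperm.countP_eq (fun x => decide (v ≤ x)), List.countP_cons]
          by_cases h : v ≤ m <;> simp [h] <;> omega
        have hcons : (p :: prev').countP (fun x => decide (v ≤ x)) =
            (if v ≤ p then 1 else 0) + prev'.countP (fun x => decide (v ≤ x)) := by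
          rw [List.countP_cons]
          by_cases h : v ≤ p <;> simp [h] <;> omega
        have hd := hdom v
        by_cases hvp : v ≤ p
        · have : v ≤ m := le_trans hvp hmge
          rw [heq, hcons] at hd
          simp only [if_pos hvp, if_pos this] at hd
          omega
        · by_cases hvm : v ≤ m
          · -- p < v ≤ m
            have hcong : (r :: rem'').countP (fun x => decide (v ≤ x)) =
                (r :: rem'').countP (fun x => decide (p ≤ x)) := by
              apply List.countP_congr
              intro x hx
              simp only [decide_eq_true_eq]
              constructor
              · intro h; omega
              · intro h; exact le_trans hvm (hmmin x hx h)
            have hmono : prev'.countP (fun x => decide (v ≤ x)) ≤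
                prev'.countP (fun x => decide (p ≤ x)) := by
              apply List.countP_mono_left
              intro x _ h
              simp only [decide_eq_true_eq] at h ⊢
              omega
            have hdp := hdom p
            have hconsp : (p :: prev').countP (fun x => decide (p ≤ x)) =
                1 + prev'.countP (fun x => decide (p ≤ x)) := by
              rw [List.countP_cons]; simp; omega
            have heqp : (r :: rem'').countP (fun x => decide (p ≤ x)) =
                1 + ((r :: rem'').erase m).countP (fun x => decide (p ≤ x)) := by
              rw [hperm.countP_eq (fun x => decide (p ≤ x)), List.countP_cons]
              simp [hmge]; omega
            have hmono2 : ((r :: rem'').erase m).countP (fun x => decide (v ≤ x)) ≤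
                ((r :: rem'').erase m).countP (fun x => decide (p ≤ x)) := by
              apply List.countP_mono_left
              intro x _ h
              simp only [decide_eq_true_eq] at h ⊢
              omega
            -- countP v erase = countP v rem - 1 ≥ countP p prev - 1 = countP p prev' ≥ countP v prev'
            rw [heq] at hcong
            simp only [if_pos hvm] at hcong
            omega
          · -- m < v : erase unchanged
            rw [heq, hcons] at hd
            simp only [if_neg hvm, if_neg hvp] at hd
            omega
      constructor
      · have := greedy N prev' ((r :: rem'').erase m)
          (fun x hx => hbp x (List.mem_cons_of_mem _ hx)) hbr' hdom' j (by simpa using hi)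
        simpa [hre] using this.1
      · intro hc hpj
        have hc' : prev'.count 1 ≤ ((r :: rem'').erase m).count 1 := by
          have herase : (r :: rem'').count 1 = (if m = 1 then 1 else 0) + ((r :: rem'').erase m).count 1 := by
            rw [hperm.count_eq, List.count_cons]
            by_cases h : m = 1 <;> simp [h] <;> omega
          have hconsc : (p :: prev').count 1 = (if p = 1 then 1 else 0) + prev'.count 1 := by
            rw [List.count_cons]
            by_cases h : p = 1 <;> simp [h] <;> omega
          by_cases hp1 : p = 1
          · have hm1 : m = 1 := hcnt1 hc hp1
            rw [if_pos hm1] at herase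
            rw [if_pos hp1] at hconsc
            omega
          · have hm1 : m ≠ 1 := by
              have := hp.1
              intro h
              omega
            rw [if_neg hm1] at herase
            rw [if_neg hp1] at hconsc
            omega
        have := greedy N prev' ((r :: rem'').erase m)
          (fun x hx => hbp x (List.mem_cons_of_mem _ hx)) hbr' hdom' j (by simpa using hi)
        have h2 := this.2 hc'
        simp only [List.getD_cons_succ] at hpj
        simp only [hre, List.getD_cons_succ]
        exact h2 hpj

lemma contains_eq (l : List ℕ) (a : ℕ) : l.contains a = decide (a ∈ l) := by simp

lemma countP_le_idx {col : List ℕ} (hp : List.Pairwise (· < ·) col) {p : ℕ} (hlt : p < col.length) :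
    col.countP (fun x => decide (x ≤ col[p])) = p + 1 := by
  have hpg := List.pairwise_iff_getElem.1 hp
  obtain ⟨w, hw⟩ : ∃ w, col[p] = w := ⟨_, rfl⟩
  rw [hw]
  conv_lhs => rw [← List.take_append_drop (p+1) col]
  rw [List.countP_append]
  have hlt1 : (col.take (p+1)).length = p + 1 := by
    rw [List.length_take]; omega
  have h1 : (col.take (p+1)).countP (fun x => decide (x ≤ w)) = p + 1 := by
    rw [List.countP_eq_length.2, hlt1]
    intro a ha
    rw [List.mem_iff_getElem] at ha
    obtain ⟨i, hi, rfl⟩ := ha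
    rw [List.getElem_take]
    simp only [decide_eq_true_eq]
    have hi' : i < p + 1 := by rw [hlt1] at hi; exact hi
    rw [← hw]
    rcases Nat.lt_or_ge i p with h | h
    · exact le_of_lt (hpg i p (by omega) hlt h)
    · have : i = p := by omega
      subst this; exact le_refl _
  have h2 : (col.drop (p+1)).countP (fun x => decide (x ≤ w)) = 0 := by
    rw [List.countP_eq_zero]
    intro a ha
    rw [List.mem_iff_getElem] at ha
    obtain ⟨j, hj, rfl⟩ := ha
    rw [List.getElem_drop]
    simp only [decide_eq_true_eq, not_le]
    have hlen : p + 1 + j < col.length := by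
      have := hj; rw [List.length_drop] at this; omega
    rw [← hw]
    exact hpg p (p+1+j) hlt hlen (by omega)
  omega

lemma countP_ge_idx {col : List ℕ} (hp : List.Pairwise (· < ·) col) {q : ℕ} (hlt : q < col.length) :
    col.countP (fun x => decide (col[q] ≤ x)) = col.length - q := by
  have hpg := List.pairwise_iff_getElem.1 hp
  obtain ⟨w, hw⟩ : ∃ w, col[q] = w := ⟨_, rfl⟩
  rw [hw]
  conv_lhs => rw [← List.take_append_drop q col]
  rw [List.countP_append]
  have hlt1 : (col.take q).length = q := by
    rw [List.length_take]; omega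
  have h1 : (col.take q).countP (fun x => decide (w ≤ x)) = 0 := by
    rw [List.countP_eq_zero]
    intro a ha
    rw [List.mem_iff_getElem] at ha
    obtain ⟨i, hi, rfl⟩ := ha
    rw [List.getElem_take]
    simp only [decide_eq_true_eq, not_le]
    have hi' : i < q := by rw [hlt1] at hi; exact hi
    rw [← hw]
    exact hpg i q (by omega) hlt hi'
  have h2 : (col.drop q).countP (fun x => decide (w ≤ x)) = (col.drop q).length := by
    rw [List.countP_eq_length]
    intro a ha
    rw [List.mem_iff_getElem] at ha
    obtain ⟨j, hj, rfl⟩ := ha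
    rw [List.getElem_drop]
    simp only [decide_eq_true_eq]
    have hlen : q + j < col.length := by
      have := hj; rw [List.length_drop] at this; omega
    rw [← hw]
    rcases Nat.eq_zero_or_pos j with h | h
    · subst h; simp
    · exact le_of_lt (hpg q (q+j) hlt hlen (by omega))
  rw [h1, h2, List.length_drop]
  omega

lemma KN_pairwise {n : ℕ} {col : List ℕ} (hKN : TC.IsKN n col) :
    List.Pairwise (· < ·) col := List.isChain_iff_pairwise.1 hKN.1

lemma KN_nodup {n : ℕ} {col : List ℕ} (hKN : TC.IsKN n col) : col.Nodup :=
  (KN_pairwise hKN).imp ne_of_lt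

lemma KN_N_le {n : ℕ} {col : List ℕ} (hKN : TC.IsKN n col) {z : ℕ}
    (hz1 : 1 ≤ z) (hzn : z ≤ n) (hz : z ∈ col) (hzb : (2*n+1-z) ∈ col) :
    col.countP (fun x => decide (x ≤ z)) + col.countP (fun x => decide (2*n+1-z ≤ x)) ≤ z := by
  obtain ⟨hchain, hbd, hcond⟩ := hKN
  have hp : List.Pairwise (· < ·) col := List.isChain_iff_pairwise.1 hchain
  have hpg := List.pairwise_iff_getElem.1 hp
  obtain ⟨p, hplt, hpe⟩ := List.mem_iff_getElem.1 hz
  obtain ⟨q, hqlt, hqe⟩ := List.mem_iff_getElem.1 hzb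
  have hzz : z < 2*n+1-z := by omega
  have hpq : p < q := by
    rcases lt_trichotomy p q with h | h | h
    · exact h
    · exfalso; subst h; rw [hpe] at hqe; omega
    · exfalso; have := hpg q p hqlt hplt h; omega
  have hcnd := hcond p q hpq hqlt
    (by rw [List.getD_eq_getElem _ _ hplt, hpe]; omega)
    (by rw [List.getD_eq_getElem _ _ hqlt, List.getD_eq_getElem _ _ hplt, hpe, hqe])
  rw [List.getD_eq_getElem _ _ hplt, hpe] at hcnd
  have hc1 : col.countP (fun x => decide (x ≤ z)) = p + 1 := by
    rw [← hpe]; exact countP_le_idx hp hplt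
  have hc2 : col.countP (fun x => decide (2*n+1-z ≤ x)) = col.length - q := by
    rw [← hqe]; exact countP_ge_idx hp hqlt
  omega

lemma KN_not_both {n : ℕ} (hn : 1 ≤ n) {col : List ℕ} (hKN : TC.IsKN n col) :
    ¬(1 ∈ col ∧ 2*n ∈ col) := by
  rintro ⟨h1, h2⟩
  obtain ⟨hchain, hbd, hcond⟩ := hKN
  have hp : List.Pairwise (· < ·) col := List.isChain_iff_pairwise.1 hchain
  have hpg := List.pairwise_iff_getElem.1 hp
  obtain ⟨p, hplt, hpe⟩ := List.mem_iff_getElem.1 h1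
  obtain ⟨q, hqlt, hqe⟩ := List.mem_iff_getElem.1 h2
  have hpq : p < q := by
    rcases lt_trichotomy p q with h | h | h
    · exact h
    · exfalso; subst h; rw [hpe] at hqe; omega
    · exfalso; have := hpg q p hqlt hplt h; omega
  have hcnd := hcond p q hpq hqlt
    (by rw [List.getD_eq_getElem _ _ hplt, hpe]; omega)
    (by rw [List.getD_eq_getElem _ _ hqlt, List.getD_eq_getElem _ _ hplt, hpe, hqe]; omega)
  rw [List.getD_eq_getElem _ _ hplt, hpe] at hcnd
  omega

lemma countP_ge1_range : ∀ z : ℕ, (List.range z).countP (fun t => decide (1 ≤ t)) = z - 1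
  | 0 => by simp
  | Nat.succ z => by
    rw [List.range_succ, List.countP_append]
    have := countP_ge1_range z
    rcases Nat.eq_zero_or_pos z with h | h
    · subst h; simp
    · simp only [List.countP_cons, List.countP_nil]
      have : (decide (1 ≤ z)) = true := by simp; omega
      rw [this] at *
      simp only [this]
      simp
      omega

lemma range_countP_mem (m : ℕ) : ∀ (col : List ℕ), col.Nodup →
    (List.range m).countP (fun t => decide (1 ≤ t) && decide (t ∈ col))
      = col.countP (fun x => decide (1 ≤ x) && decide (x < m))
  | [], _ => by simp
  | c :: col', hnd => by
    have hnotm : c ∉ col' := (List.nodup_cons.1 hnd).1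
    have ih := range_countP_mem m col' (List.nodup_cons.1 hnd).2
    have hsplit : (List.range m).countP (fun t => decide (1 ≤ t) && decide (t ∈ c :: col'))
          + (List.range m).countP (fun _ => false)
        = (List.range m).countP (fun t => decide (1 ≤ t) && decide (t = c))
          + (List.range m).countP (fun t => decide (1 ≤ t) && decide (t ∈ col')) := by
      apply countP_quad
      intro u _
      by_cases h1 : 1 ≤ u <;> by_cases hc : u = c <;> by_cases hm : u ∈ col' <;>
        first
        | (exfalso; exact hnotm (hc ▸ hm))
        | simp [h1, hc, hm, hnotm, List.mem_cons]
    have hsing : (List.range m).countP (fun t => decide (1 ≤ t) && decide (t = c))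
        = if 1 ≤ c ∧ c < m then 1 else 0 := by
      by_cases hc : 1 ≤ c ∧ c < m
      · rw [if_pos hc]
        have hcong : (List.range m).countP (fun t => decide (1 ≤ t) && decide (t = c))
            = (List.range m).countP (fun t => t == c) := by
          apply List.countP_congr
          intro u _
          constructor
          · intro h; simp only [Bool.and_eq_true, decide_eq_true_eq] at h
            simp [h.2]
          · intro h
            simp only [beq_iff_eq] at h
            subst h
            simp; omega
        rw [hcong, ← List.count_eq_countP, List.count_eq_one_of_mem (List.nodup_range (n := m))
          (List.mem_range.2 hc.2)]
      · rw [if_neg hc]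
        rw [List.countP_eq_zero]
        intro u hu
        rw [List.mem_range] at hu
        simp only [Bool.and_eq_true, decide_eq_true_eq, not_and]
        intro h1 h2
        subst h2
        omega
    have hrhs : (c :: col').countP (fun x => decide (1 ≤ x) && decide (x < m))
        = col'.countP (fun x => decide (1 ≤ x) && decide (x < m))
          + (if 1 ≤ c ∧ c < m then 1 else 0) := by
      rw [List.countP_cons]
      by_cases hc : 1 ≤ c ∧ c < m
      · rw [if_pos hc]
        have : (decide (1 ≤ c) && decide (c < m)) = true := by
          simp [hc.1, hc.2]
        rw [this]; simp
      · rw [if_neg hc]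
        have : (decide (1 ≤ c) && decide (c < m)) = false := by
          rcases not_and_or.1 hc with h | h <;> simp at h <;> simp [h] <;> omega
        rw [this]; simp
    simp only [List.countP_false, Function.const_apply] at hsplit
    omega

lemma range_countP_bar (n z : ℕ) : ∀ (col : List ℕ), col.Nodup → (∀ x ∈ col, 1 ≤ x ∧ x ≤ 2*n) →
    (List.range z).countP (fun t => decide (1 ≤ t) && decide ((2*n+1-t) ∈ col))
      = col.countP (fun x => decide (2*n+2-z ≤ x))
  | [], _, _ => by simp
  | c :: col', hnd, hbd => by
    have hnotm : c ∉ col' := (List.nodup_cons.1 hnd).1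
    have hcb := hbd c (by simp)
    have ih := range_countP_bar n z col' (List.nodup_cons.1 hnd).2
      (fun x hx => hbd x (List.mem_cons_of_mem _ hx))
    have hsplit : (List.range z).countP (fun t => decide (1 ≤ t) && decide ((2*n+1-t) ∈ c :: col'))
          + (List.range z).countP (fun _ => false)
        = (List.range z).countP (fun t => decide (1 ≤ t) && decide (2*n+1-t = c))
          + (List.range z).countP (fun t => decide (1 ≤ t) && decide ((2*n+1-t) ∈ col')) := by
      apply countP_quad
      intro u _
      by_cases h1 : 1 ≤ u <;> by_cases hc : 2*n+1-u = c <;> by_cases hm : (2*n+1-u) ∈ col' <;>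
        first
        | (exfalso; exact hnotm (hc ▸ hm))
        | simp [h1, hc, hm, hnotm, List.mem_cons]
    have hsing : (List.range z).countP (fun t => decide (1 ≤ t) && decide (2*n+1-t = c))
        = if 2*n+2-z ≤ c then 1 else 0 := by
      by_cases hc : 2*n+2-z ≤ c
      · rw [if_pos hc]
        have hcong : (List.range z).countP (fun t => decide (1 ≤ t) && decide (2*n+1-t = c))
            = (List.range z).countP (fun t => t == 2*n+1-c) := by
          apply List.countP_congr
          intro u hu
          rw [List.mem_range] at hu
          simp only [Bool.and_eq_true, decide_eq_true_eq, beq_iff_eq]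
          omega
        rw [hcong, ← List.count_eq_countP, List.count_eq_one_of_mem (List.nodup_range (n := z))
          (List.mem_range.2 (by omega))]
      · rw [if_neg hc]
        rw [List.countP_eq_zero]
        intro u hu
        rw [List.mem_range] at hu
        simp only [Bool.and_eq_true, decide_eq_true_eq, not_and]
        intro h1 h2
        omega
    have hrhs : (c :: col').countP (fun x =>  decide (2*n+2-z ≤ x))
        = col'.countP (fun x => decide (2*n+2-z ≤ x)) + (if 2*n+2-z ≤ c then 1 else 0) := by
      rw [List.countP_cons]
      by_cases hc : 2*n+2-z ≤ c
      · rw [if_pos hc]; simp [hc]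
      · rw [if_neg hc]; simp [hc]
    simp only [List.countP_false, Function.const_apply] at hsplit
    omega

/-- The predicate of `TC.findT`. -/
def freeP (n : ℕ) (col : List ℕ) : ℕ → Bool :=
  fun t => decide (1 ≤ t) && !(col.contains t) && !(col.contains (2*n+1-t))

def dupP (n : ℕ) (col : List ℕ) : ℕ → Bool :=
  fun u => decide (u ∈ col) && decide ((2*n+1-u) ∈ col)

lemma freeP_iff {n : ℕ} {col : List ℕ} {t : ℕ} :
    freeP n col t = true ↔ 1 ≤ t ∧ t ∉ col ∧ (2*n+1-t) ∉ col := by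
  simp [freeP]
  tauto

lemma findT_eq (n : ℕ) (col : List ℕ) (bound : ℕ) :
    TC.findT n col bound = ((List.range bound).filter (freeP n col)).foldl max 0 := rfl

lemma free_counting {n : ℕ} {col : List ℕ} (hKN : TC.IsKN n col) {z : ℕ}
    (hz1 : 1 ≤ z) (hzn : z ≤ n) (hz : z ∈ col) (hzb : (2*n+1-z) ∈ col) :
    ((List.range z).filter (dupP n col)).length + 1 ≤
      ((List.range z).filter (freeP n col)).length := by
  have hbd := hKN.2.1
  have h0 : (0:ℕ) ∉ col := fun h => by have := hbd 0 h; omega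
  have hnd : col.Nodup := KN_nodup hKN
  rw [← List.countP_eq_length_filter, ← List.countP_eq_length_filter]
  -- predicates
  have e1 : (List.range z).countP (freeP n col)
      + (List.range z).countP (fun u => decide (1 ≤ u) && (decide (u ∈ col) || decide ((2*n+1-u) ∈ col)))
      = (List.range z).countP (fun u => decide (1 ≤ u)) + (List.range z).countP (fun _ => false) := by
    apply countP_quad
    intro u _
    by_cases c : 1 ≤ u
    · by_cases a : u ∈ col <;> by_cases b : (2*n+1-u) ∈ col <;>
        simp [freeP, a, b, c]
    · have : u = 0 := by omega
      subst this
      simp [freeP, h0]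
  have e2 : (List.range z).countP (fun u => decide (1 ≤ u) && (decide (u ∈ col) || decide ((2*n+1-u) ∈ col)))
      + (List.range z).countP (dupP n col)
      = (List.range z).countP (fun u => decide (1 ≤ u) && decide (u ∈ col))
      + (List.range z).countP (fun u => decide (1 ≤ u) && decide ((2*n+1-u) ∈ col)) := by
    apply countP_quad
    intro u _
    by_cases c : 1 ≤ u
    · by_cases a : u ∈ col <;> by_cases b : (2*n+1-u) ∈ col <;>
        simp [dupP, a, b, c]
    · have : u = 0 := by omega
      subst this
      simp [dupP, h0]
  have e3 : (List.range z).countP (fun u => decide (1 ≤ u) && decide (u ∈ col))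
      = col.countP (fun x => decide (x < z)) := by
    rw [range_countP_mem z col hnd]
    apply List.countP_congr
    intro x hx
    have := hbd x hx
    simp only [Bool.and_eq_true, decide_eq_true_eq]
    constructor
    · intro h; exact h.2
    · intro h; exact ⟨by omega, h⟩
  have e4 : (List.range z).countP (fun u => decide (1 ≤ u) && decide ((2*n+1-u) ∈ col))
      = col.countP (fun x => decide (2*n+2-z ≤ x)) := range_countP_bar n z col hnd hbd
  have e5 : col.countP (fun x => decide (x ≤ z))
      = col.countP (fun x => decide (x < z)) + col.countP (fun x => x == z) := by
    have := countP_quad (fun x => decide (x ≤ z)) (fun _ => false)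
      (fun x => decide (x < z)) (fun x => x == z) col ?_
    · simpa using this
    · intro x _
      by_cases h : x = z
      · subst h; simp
      · by_cases h2 : x < z
        · simp [h, h2]; omega
        · simp [h, h2]; omega
  have e6 : col.countP (fun x => decide (2*n+1-z ≤ x))
      = col.countP (fun x => decide (2*n+2-z ≤ x)) + col.countP (fun x => x == 2*n+1-z) := by
    have := countP_quad (fun x => decide (2*n+1-z ≤ x)) (fun _ => false)
      (fun x => decide (2*n+2-z ≤ x)) (fun x => x == 2*n+1-z) col ?_
    · simpa using this
    · intro x _
      by_cases h : x = 2*n+1-z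
      · subst h; simp; omega
      · by_cases h2 : 2*n+2-z ≤ x
        · simp [h, h2]; omega
        · simp [h, h2]; omega
  have c1 : col.countP (fun x => x == z) = 1 := by
    rw [← List.count_eq_countP, List.count_eq_one_of_mem hnd hz]
  have c2 : col.countP (fun x => x == 2*n+1-z) = 1 := by
    rw [← List.count_eq_countP, List.count_eq_one_of_mem hnd hzb]
  have e7 := KN_N_le hKN hz1 hzn hz hzb
  have e8 := countP_ge1_range z
  have e9 : (List.range z).countP (fun _ : ℕ => false) = 0 := by simp
  omega

lemma foldl_filter_max_props {P : ℕ → Bool} {bound : ℕ}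
    (hne : (List.range bound).filter P ≠ [])
    (hP : ∀ u, P u = true → 1 ≤ u) :
    ((List.range bound).filter P).foldl max 0 ∈ (List.range bound).filter P ∧
      ∀ u ∈ (List.range bound).filter P, u ≤ ((List.range bound).filter P).foldl max 0 := by
  obtain ⟨h1, _, h3⟩ := foldl_max_spec ((List.range bound).filter P) 0
  obtain ⟨a, ha⟩ := List.exists_mem_of_ne_nil _ hne
  have ha1 : 1 ≤ a := hP a (List.of_mem_filter ha)
  have := h3 a ha
  rcases h1 with h | h
  · omega
  · exact ⟨h, h3⟩

lemma dup_le_free {n : ℕ} {col : List ℕ} (hKN : TC.IsKN n col) {z : ℕ}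
    (hz1 : 1 ≤ z) (hzn : z ≤ n) (hz : z ∈ col) (hzb : (2*n+1-z) ∈ col)
    (rest : List ℕ) (hnd : rest.Nodup)
    (hr : ∀ w ∈ rest, w < z ∧ w ∈ col ∧ (2*n+1-w) ∈ col) :
    rest.length + 1 ≤ ((List.range z).filter (freeP n col)).length := by
  have hsub : rest ⊆ (List.range z).filter (dupP n col) := by
    intro w hw
    obtain ⟨h1, h2, h3⟩ := hr w hw
    apply List.mem_filter.2
    refine ⟨List.mem_range.2 h1, ?_⟩
    simp [dupP, h2, h3]
  have hle : rest.length ≤ ((List.range z).filter (dupP n col)).length :=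
    (hnd.subperm hsub).length_le
  have := free_counting hKN hz1 hzn hz hzb
  omega

lemma Jgo_spec (n : ℕ) (col : List ℕ) (hKN : TC.IsKN n col) :
    ∀ (I' : List ℕ) (prev : ℕ),
      List.Pairwise (· > ·) I' →
      (∀ z ∈ I', 1 ≤ z ∧ z ≤ n ∧ z ∈ col ∧ (2*n+1-z) ∈ col) →
      (∀ z rest, I' = z :: rest →
        I'.length ≤ ((List.range (min prev z)).filter (freeP n col)).length) →
      ∀ pr ∈ I'.zip (TC.Jgo n col I' prev), 1 ≤ pr.2 ∧ pr.2 < pr.1 ∧ pr.2 ∉ col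
  | [], prev, _, _, _ => by simp [TC.Jgo]
  | z :: rest, prev, hpw, hmem, hinv => by
    intro pr hpr
    have hinv0 := hinv z rest rfl
    have hne : (List.range (min prev z)).filter (freeP n col) ≠ [] := by
      intro h
      rw [h] at hinv0
      simp at hinv0
    obtain ⟨htmem, htmax⟩ := foldl_filter_max_props hne (fun u hu => (freeP_iff.1 hu).1)
    rw [← findT_eq] at htmem htmax
    set t := TC.findT n col (min prev z) with ht
    have htr := List.mem_range.1 (List.mem_filter.1 htmem).1
    obtain ⟨ht1, htnc, _⟩ := freeP_iff.1 (List.mem_filter.1 htmem).2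
    have hunf : TC.Jgo n col (z :: rest) prev = t :: TC.Jgo n col rest t := rfl
    rw [hunf, List.zip_cons_cons] at hpr
    rcases List.mem_cons.1 hpr with rfl | hpr'
    · exact ⟨ht1, by simp only []; omega, htnc⟩
    · have hpwr : List.Pairwise (· > ·) rest := hpw.of_cons
      have hmemr : ∀ w ∈ rest, 1 ≤ w ∧ w ≤ n ∧ w ∈ col ∧ (2*n+1-w) ∈ col :=
        fun w hw => hmem w (List.mem_cons_of_mem _ hw)
      refine Jgo_spec n col hKN rest t hpwr hmemr ?_ pr hpr'
      intro z'' rest'' heq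
      by_cases hcase : t ≤ z''
      · rw [min_eq_left hcase]
        have hsub : (List.range (min prev z)).filter (freeP n col) ⊆
            t :: (List.range t).filter (freeP n col) := by
          intro u hu
          have hule := htmax u hu
          rcases eq_or_lt_of_le hule with h | h
          · exact h ▸ List.mem_cons_self
          · apply List.mem_cons_of_mem
            exact List.mem_filter.2 ⟨List.mem_range.2 h, (List.mem_filter.1 hu).2⟩
        have hndf : ((List.range (min prev z)).filter (freeP n col)).Nodup :=
          List.nodup_range.filter _
        have hlen := (hndf.subperm hsub).length_le
        rw [List.length_cons] at hlen
        rw [heq] at hinv0 ⊢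
        simp only [List.length_cons] at hinv0 ⊢
        omega
      · push_neg at hcase
        rw [min_eq_right (le_of_lt hcase)]
        have hz'' : z'' ∈ rest := heq ▸ List.mem_cons_self
        obtain ⟨ha, hb, hc, hd⟩ := hmemr z'' hz''
        have hrest'' : ∀ w ∈ rest'', w < z'' ∧ w ∈ col ∧ (2*n+1-w) ∈ col := by
          intro w hw
          have hpw'' : List.Pairwise (· > ·) (z'' :: rest'') := heq ▸ hpwr
          have hlt : z'' > w := (List.pairwise_cons.1 hpw'').1 w hw
          obtain ⟨_, _, h3, h4⟩ := hmemr w (heq ▸ List.mem_cons_of_mem _ hw)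
          exact ⟨hlt, h3, h4⟩
        have hnd'' : rest''.Nodup := ((heq ▸ hpwr).of_cons).imp (fun h => (ne_of_gt h))
        have := dup_le_free hKN ha hb hc hd rest'' hnd'' hrest''
        rw [heq]
        simpa using this

lemma Icompute_pairwise (n : ℕ) (col : List ℕ) :
    List.Pairwise (· > ·) (TC.Icompute n col) := by
  unfold TC.Icompute
  rw [List.pairwise_reverse]
  apply List.Pairwise.filter
  rw [List.pairwise_map]
  exact (List.pairwise_lt_range (n := n)).imp (fun h => by omega)

lemma Icompute_mem {n : ℕ} {col : List ℕ} {z : ℕ} (hz : z ∈ TC.Icompute n col) :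
    1 ≤ z ∧ z ≤ n ∧ z ∈ col ∧ (2*n+1-z) ∈ col := by
  unfold TC.Icompute at hz
  rw [List.mem_reverse, List.mem_filter] at hz
  obtain ⟨hz1, hz2⟩ := hz
  rw [List.mem_map] at hz1
  obtain ⟨u, hu, rfl⟩ := hz1
  rw [List.mem_range] at hu
  simp only [Bool.and_eq_true] at hz2
  rw [contains_eq, contains_eq] at hz2
  simp only [decide_eq_true_eq] at hz2
  exact ⟨by omega, by omega, hz2.1, hz2.2⟩

lemma JT_spec {n : ℕ} {col : List ℕ} (hKN : TC.IsKN n col) :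
    ∀ pr ∈ (TC.Icompute n col).zip (TC.Jcompute n col),
      1 ≤ pr.2 ∧ pr.2 < pr.1 ∧ pr.2 ∉ col := by
  unfold TC.Jcompute
  apply Jgo_spec n col hKN (TC.Icompute n col) (n+1) (Icompute_pairwise n col)
    (fun z hz => Icompute_mem hz)
  intro z rest heq
  have hz := Icompute_mem (n := n) (col := col) (heq ▸ List.mem_cons_self (a := z) (l := rest))
  obtain ⟨ha, hb, hc, hd⟩ := hz
  rw [min_eq_right (by omega)]
  have hpwI := Icompute_pairwise n col
  rw [heq] at hpwI
  have hrest : ∀ w ∈ rest, w < z ∧ w ∈ col ∧ (2*n+1-w) ∈ col := by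
    intro w hw
    have hlt : z > w := (List.pairwise_cons.1 hpwI).1 w hw
    obtain ⟨_, _, h3, h4⟩ := Icompute_mem (n := n) (col := col) (heq ▸ List.mem_cons_of_mem _ hw)
    exact ⟨hlt, h3, h4⟩
  have hnd : rest.Nodup := (hpwI.of_cons).imp (fun h => (ne_of_gt h))
  have := dup_le_free hKN ha hb hc hd rest hnd hrest
  rw [heq]
  simpa using this

lemma insSorted_perm (x : ℕ) : ∀ l : List ℕ, TC.insSorted x l ~ x :: l
  | [] => by simp [TC.insSorted]
  | y :: l => by
    unfold TC.insSorted
    by_cases h : x ≤ y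
    · rw [if_pos h]
    · rw [if_neg h]
      exact ((insSorted_perm x l).cons y).trans (List.Perm.swap x y l)

lemma sortList_perm : ∀ l : List ℕ, TC.sortList l ~ l
  | [] => by simp [TC.sortList]
  | a :: l => by
    have h1 : TC.sortList (a :: l) = TC.insSorted a (TC.sortList l) := rfl
    rw [h1]
    exact (insSorted_perm a (TC.sortList l)).trans ((sortList_perm l).cons a)

lemma applySubst_none {s : List (ℕ × ℕ)} {x : ℕ}
    (h : s.find? (fun p => p.1 == x) = none) : TC.applySubst s x = x := by
  simp [TC.applySubst, h]

lemma applySubst_some {s : List (ℕ × ℕ)} {x : ℕ} {pr : ℕ × ℕ}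
    (h : s.find? (fun p => p.1 == x) = some pr) : TC.applySubst s x = pr.2 := by
  simp [TC.applySubst, h]

lemma fsub_spec {n : ℕ} {col : List ℕ} (hKN : TC.IsKN n col) (x : ℕ) (hx1 : 1 ≤ x) :
    1 ≤ TC.applySubst ((TC.Icompute n col).zip (TC.Jcompute n col)) x ∧
    TC.applySubst ((TC.Icompute n col).zip (TC.Jcompute n col)) x ≤ x := by
  cases h : ((TC.Icompute n col).zip (TC.Jcompute n col)).find? (fun p => p.1 == x) with
  | none => rw [applySubst_none h]; omega
  | some pr =>
    rw [applySubst_some h]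
    have hmem := List.mem_of_find?_eq_some h
    have hp := List.find?_some h
    simp only [beq_iff_eq] at hp
    obtain ⟨h1, h2, _⟩ := JT_spec hKN pr hmem
    omega

lemma fsub_one_iff {n : ℕ} {col : List ℕ} (hn : 1 ≤ n) (hKN : TC.IsKN n col)
    (h1col : 1 ∈ col) (x : ℕ) :
    TC.applySubst ((TC.Icompute n col).zip (TC.Jcompute n col)) x = 1 ↔ x = 1 := by
  constructor
  · intro h
    cases hf : ((TC.Icompute n col).zip (TC.Jcompute n col)).find? (fun p => p.1 == x) with
    | none => rw [applySubst_none hf] at h; exact h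
    | some pr =>
      rw [applySubst_some hf] at h
      obtain ⟨_, _, hnc⟩ := JT_spec hKN pr (List.mem_of_find?_eq_some hf)
      exact absurd (h ▸ h1col) hnc
  · rintro rfl
    cases hf : ((TC.Icompute n col).zip (TC.Jcompute n col)).find? (fun p => p.1 == 1) with
    | none => exact applySubst_none hf
    | some pr =>
      exfalso
      have hmem := List.mem_of_find?_eq_some hf
      have hp := List.find?_some hf
      simp only [beq_iff_eq] at hp
      have hI : pr.1 ∈ TC.Icompute n col := (List.of_mem_zip hmem).1
      rw [hp] at hI
      obtain ⟨_, _, hc, hd⟩ := Icompute_mem hI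
      have : 2*n+1-1 = 2*n := by omega
      rw [this] at hd
      exact KN_not_both hn hKN ⟨hc, hd⟩

lemma gsub_mem_zip {n : ℕ} {col : List ℕ} {pr : ℕ × ℕ}
    (h : pr ∈ ((TC.Icompute n col).map (fun z => 2*n+1-z)).zip
      ((TC.Jcompute n col).map (fun t => 2*n+1-t))) :
    ∃ q ∈ (TC.Icompute n col).zip (TC.Jcompute n col),
      pr = (2*n+1-q.1, 2*n+1-q.2) := by
  rw [List.zip_map] at h
  rw [List.mem_map] at h
  obtain ⟨q, hq, rfl⟩ := h
  exact ⟨q, hq, rfl⟩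

lemma gsub_spec {n : ℕ} {col : List ℕ} (hKN : TC.IsKN n col) (x : ℕ)
    (hx1 : 1 ≤ x) (hx2 : x ≤ 2*n) :
    x ≤ TC.applySubst (((TC.Icompute n col).map (fun z => 2*n+1-z)).zip
      ((TC.Jcompute n col).map (fun t => 2*n+1-t))) x ∧
    TC.applySubst (((TC.Icompute n col).map (fun z => 2*n+1-z)).zip
      ((TC.Jcompute n col).map (fun t => 2*n+1-t))) x ≤ 2*n ∧
    1 ≤ TC.applySubst (((TC.Icompute n col).map (fun z => 2*n+1-z)).zip
      ((TC.Jcompute n col).map (fun t => 2*n+1-t))) x := by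
  cases h : (((TC.Icompute n col).map (fun z => 2*n+1-z)).zip
      ((TC.Jcompute n col).map (fun t => 2*n+1-t))).find? (fun p => p.1 == x) with
  | none => rw [applySubst_none h]; omega
  | some pr =>
    rw [applySubst_some h]
    have hmem := List.mem_of_find?_eq_some h
    have hp := List.find?_some h
    simp only [beq_iff_eq] at hp
    obtain ⟨q, hq, rfl⟩ := gsub_mem_zip hmem
    obtain ⟨h1, h2, _⟩ := JT_spec hKN q hq
    have hqI : q.1 ∈ TC.Icompute n col := (List.of_mem_zip hq).1
    obtain ⟨ha, hb, _, _⟩ := Icompute_mem hqI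
    simp only at hp ⊢
    omega

lemma gsub_one {n : ℕ} {col : List ℕ} (hn : 1 ≤ n) :
    TC.applySubst (((TC.Icompute n col).map (fun z => 2*n+1-z)).zip
      ((TC.Jcompute n col).map (fun t => 2*n+1-t))) 1 = 1 := by
  apply applySubst_none
  rw [List.find?_eq_none]
  intro pr hpr
  obtain ⟨q, hq, rfl⟩ := gsub_mem_zip hpr
  have hqI : q.1 ∈ TC.Icompute n col := (List.of_mem_zip hq).1
  obtain ⟨ha, hb, _, _⟩ := Icompute_mem hqI
  simp only [beq_iff_eq]
  omega

lemma split_pkg {n : ℕ} {col : List ℕ} (hn : 1 ≤ n) (hKN : TC.IsKN n col) :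
    (TC.splitL n col).length = col.length ∧
    (TC.splitR n col).length = col.length ∧
    (∀ x ∈ TC.splitL n col, 1 ≤ x ∧ x ≤ 2*n) ∧
    (∀ x ∈ TC.splitR n col, 1 ≤ x ∧ x ≤ 2*n) ∧
    (∀ v, (TC.splitL n col).countP (fun x => decide (v ≤ x)) ≤
      (TC.splitR n col).countP (fun x => decide (v ≤ x))) ∧
    (1 ∈ col → (TC.splitL n col).count 1 ≤ (TC.splitR n col).count 1) := by
  have hbd := hKN.2.1
  have hpermL : TC.splitL n col ~
      col.map (TC.applySubst ((TC.Icompute n col).zip (TC.Jcompute n col))) :=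
    sortList_perm _
  have hpermR : TC.splitR n col ~
      col.map (TC.applySubst (((TC.Icompute n col).map (fun z => 2*n+1-z)).zip
        ((TC.Jcompute n col).map (fun t => 2*n+1-t)))) :=
    sortList_perm _
  refine ⟨?_, ?_, ?_, ?_, ?_, ?_⟩
  · rw [hpermL.length_eq, List.length_map]
  · rw [hpermR.length_eq, List.length_map]
  · intro x hx
    rw [hpermL.mem_iff, List.mem_map] at hx
    obtain ⟨y, hy, rfl⟩ := hx
    have hyb := hbd y hy
    have := fsub_spec hKN y hyb.1
    omega
  · intro x hx
    rw [hpermR.mem_iff, List.mem_map] at hx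
    obtain ⟨y, hy, rfl⟩ := hx
    have hyb := hbd y hy
    have := gsub_spec hKN y hyb.1 hyb.2
    omega
  · intro v
    rw [hpermL.countP_eq, hpermR.countP_eq, List.countP_map, List.countP_map]
    apply List.countP_mono_left
    intro y hy
    have hyb := hbd y hy
    have h1 := fsub_spec hKN y hyb.1
    have h2 := gsub_spec hKN y hyb.1 hyb.2
    simp only [Function.comp_apply, decide_eq_true_eq]
    omega
  · intro h1col
    rw [hpermL.count_eq, hpermR.count_eq, List.count_eq_countP, List.count_eq_countP,
      List.countP_map, List.countP_map]
    have hL : col.countP ((fun x => x == 1) ∘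
        TC.applySubst ((TC.Icompute n col).zip (TC.Jcompute n col)))
        = col.countP (fun y => y == 1) := by
      apply List.countP_congr
      intro y hy
      simp only [Function.comp_apply, beq_iff_eq]
      exact fsub_one_iff hn hKN h1col y
    rw [hL]
    apply List.countP_mono_left
    intro y _
    simp only [Function.comp_apply, beq_iff_eq]
    rintro rfl
    exact gsub_one hn

lemma splitFilling_cons (n : ℕ) (col : List ℕ) (rest : List (List ℕ)) :
    TC.splitFilling n (col :: rest) =
      TC.splitL n col :: TC.splitR n col :: TC.splitFilling n rest := by
  simp [TC.splitFilling]

lemma main_go (n : ℕ) (hn : 1 ≤ n) :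
    ∀ (b : List (List ℕ)) (prev : List ℕ),
      (∀ col ∈ b, TC.IsKN n col) →
      (b.map List.length).Chain' (· ≥ ·) →
      (∀ x ∈ prev, 1 ≤ x ∧ x ≤ 2*n) →
      (∀ col, b.head? = some col → col.length ≤ prev.length) →
      ∀ j i, i < ((CO.circOrdGo (2*n) prev (TC.splitFilling n b)).getD (2*j+1) []).length →
        ((CO.circOrdGo (2*n) prev (TC.splitFilling n b)).getD (2*j) []).getD i 0 ≤
          ((CO.circOrdGo (2*n) prev (TC.splitFilling n b)).getD (2*j+1) []).getD i 0 ∧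
        (1 ∈ b.getD j [] →
          ((CO.circOrdGo (2*n) prev (TC.splitFilling n b)).getD (2*j) []).getD i 0 = 1 →
          ((CO.circOrdGo (2*n) prev (TC.splitFilling n b)).getD (2*j+1) []).getD i 0 = 1)
  | [], prev, _, _, _, _, j, i, hi => by
    simp [TC.splitFilling, CO.circOrdGo] at hi
  | col :: rest, prev, hcols, hchain, hbp, hhead, j, i, hi => by
    have hKNc : TC.IsKN n col := hcols col (by simp)
    obtain ⟨hlenL, hlenR, hbL, hbR, hdomLR, hcnt1⟩ := split_pkg hn hKNc
    have hprevlen : col.length ≤ prev.length := hhead col rfl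
    have hgo : CO.circOrdGo (2*n) prev (TC.splitFilling n (col :: rest)) =
        CO.reorderCol (2*n) prev (TC.splitL n col) ::
        CO.reorderCol (2*n) (CO.reorderCol (2*n) prev (TC.splitL n col)) (TC.splitR n col) ::
        CO.circOrdGo (2*n)
          (CO.reorderCol (2*n) (CO.reorderCol (2*n) prev (TC.splitL n col)) (TC.splitR n col))
          (TC.splitFilling n rest) := by
      rw [splitFilling_cons]
      rfl
    set cL := CO.reorderCol (2*n) prev (TC.splitL n col) with hcL
    set cR := CO.reorderCol (2*n) cL (TC.splitR n col) with hcR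
    have hsubL : cL.Subperm (TC.splitL n col) := reorderCol_subperm _ _ _
    have hsubR : cR.Subperm (TC.splitR n col) := reorderCol_subperm _ _ _
    have hbcL : ∀ x ∈ cL, 1 ≤ x ∧ x ≤ 2*n := fun x hx => hbL x (hsubL.subset hx)
    have hbcR : ∀ x ∈ cR, 1 ≤ x ∧ x ≤ 2*n := fun x hx => hbR x (hsubR.subset hx)
    have hcLlen : cL.length = col.length := by
      rw [hcL, reorderCol_length, hlenL]
      omega
    have hcRlen : cR.length = col.length := by
      rw [hcR, reorderCol_length, hlenR, hcLlen]
      omega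
    have hdom : ∀ v, cL.countP (fun x => decide (v ≤ x)) ≤
        (TC.splitR n col).countP (fun x => decide (v ≤ x)) :=
      fun v => le_trans (hsubL.countP_le _) (hdomLR v)
    match j with
    | 0 =>
      rw [hgo] at hi ⊢
      simp only [List.getD_cons_zero, List.getD_cons_succ] at hi ⊢
      have hi' : i < cL.length := by
        rw [hcLlen, ← hcRlen]
        exact hi
      have hg := greedy (2*n) cL (TC.splitR n col) hbcL hbR hdom i hi'
      refine ⟨hg.1, ?_⟩
      intro h1col
      exact hg.2 (le_trans (hsubL.count_le 1) (hcnt1 h1col))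
    | j' + 1 =>
      have hih := main_go n hn rest cR
        (fun c hc => hcols c (List.mem_cons_of_mem _ hc))
        (by have := hchain.tail; simpa [List.Chain'] using this)
        hbcR
        (by
          intro c2 hc2
          cases rest with
          | nil => simp at hc2
          | cons c2' rest' =>
            simp only [List.head?_cons, Option.some.injEq] at hc2
            subst hc2
            have hch2 : c2'.length ≤ col.length ∧
                List.Chain' (fun x1 x2 => x2 ≤ x1) (c2'.length :: List.map List.length rest') := by
              simpa [List.Chain'] using hchain
            omega)
        j' i
      rw [hgo] at hi ⊢
      simp only [List.getD_cons_succ] at hi ⊢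
      exact hih hi

end KNAux
end AuxProof

/-- within each split pair `c_j^L c_j^R` of the circularly reordered
split filling of a tensor product of KN columns there is no descent,
i.e. `c_j^L(i) ≤ c_j^R(i)`; consequently, if the column `b_j` contains the
letter `1` and `c_j^L(i) = 1, then `c_j^R(i) = 1`. -/
theorem no_descent_in_split_pair (n : ℕ) (hn : 1 ≤ n) (b : List (List ℕ))
    (hcols : ∀ col ∈ b, TC.IsKN n col)
    (hdec : (b.map List.length).Chain' (· ≥ ·)) :
    ∀ j i, i < ((CO.circOrd (2*n) (TC.splitFilling n b)).getD (2*j+1) []).length →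
      ((CO.circOrd (2*n) (TC.splitFilling n b)).getD (2*j) []).getD i 0 ≤
        ((CO.circOrd (2*n) (TC.splitFilling n b)).getD (2*j+1) []).getD i 0 ∧
      (1 ∈ b.getD j [] →
        ((CO.circOrd (2*n) (TC.splitFilling n b)).getD (2*j) []).getD i 0 = 1 →
        ((CO.circOrd (2*n) (TC.splitFilling n b)).getD (2*j+1) []).getD i 0 = 1) := by
  intro j i hi
  cases b with
  | nil =>
    exfalso
    simp [TC.splitFilling, CO.circOrd] at hi
  | cons col rest =>
    have hKNc : TC.IsKN n col := hcols col (by simp)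
    obtain ⟨hlenL, hlenR, hbL, hbR, hdomLR, hcnt1⟩ := KNAux.split_pkg hn hKNc
    have hcirc : CO.circOrd (2*n) (TC.splitFilling n (col :: rest)) =
        TC.splitL n col ::
        CO.reorderCol (2*n) (TC.splitL n col) (TC.splitR n col) ::
        CO.circOrdGo (2*n) (CO.reorderCol (2*n) (TC.splitL n col) (TC.splitR n col))
          (TC.splitFilling n rest) := by
      rw [KNAux.splitFilling_cons]
      rfl
    set c1 := CO.reorderCol (2*n) (TC.splitL n col) (TC.splitR n col) with hc1
    have hsub1 : c1.Subperm (TC.splitR n col) := KNAux.reorderCol_subperm _ _ _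
    have hbc1 : ∀ x ∈ c1, 1 ≤ x ∧ x ≤ 2*n := fun x hx => hbR x (hsub1.subset hx)
    have hc1len : c1.length = col.length := by
      rw [hc1, KNAux.reorderCol_length, hlenL, hlenR]
      omega
    match j with
    | 0 =>
      rw [hcirc] at hi ⊢
      simp only [List.getD_cons_zero, List.getD_cons_succ] at hi ⊢
      have hi' : i < (TC.splitL n col).length := by
        rw [hlenL, ← hc1len]
        exact hi
      have hg := KNAux.greedy (2*n) (TC.splitL n col) (TC.splitR n col) hbL hbR hdomLR i hi'
      exact ⟨hg.1, fun h1col => hg.2 (hcnt1 h1col)⟩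
    | j' + 1 =>
      have hih := KNAux.main_go n hn rest c1
        (fun c hc => hcols c (List.mem_cons_of_mem _ hc))
        (by have := hdec.tail; simpa [List.Chain'] using this)
        hbc1
        (by
          intro c2 hc2
          cases rest with
          | nil => simp at hc2
          | cons c2' rest' =>
            simp only [List.head?_cons, Option.some.injEq] at hc2
            subst hc2
            have hch2 : c2'.length ≤ col.length ∧
                List.Chain' (fun x1 x2 => x2 ≤ x1) (c2'.length :: List.map List.length rest') := by
              simpa [List.Chain'] using hdec
            omega)
        j' i
      rw [hcirc] at hi ⊢
      simp only [List.getD_cons_succ] at hi ⊢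
      exact hih hi
end
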